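/- arXiv:2007.13191 — 5 statements merged into one kernel-verified Lean document; each statement's English description precedes it below -/
import Mathlib

section
/- Let 0 < ρ < 1 and let p be a real number with p ∉ {−1, 1, 3}. Then I_{p−4} = −R_{p−3}/(p−3) − R_{p−1}/((p−1)(p−3)) − p·R_{p+1}/((p+1)(p−1)(p−3)) + (p+2)·p·S_{p+2}/((p+1)(p−1)(p−3)), and for p ∉ {−1, 1}: I_{p−2} = −R_{p−1}/(p−1) − R_{p+1}/((p+1)(p−1)) + (p+2)·S_{p+2}/((p+1)(p−1)). -/
/-- `I_q = ∫_{√ρ}^{1} √(1−ξ²) ξ^q dξ`. -/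
noncomputable def Iq (ρ q : ℝ) : ℝ :=
  ∫ ξ in Real.sqrt ρ..1, Real.sqrt (1 - ξ ^ 2) * ξ ^ q

/-- `S_q = ∫_{arcsin √ρ}^{π/2} sin^q φ dφ`. -/
noncomputable def Sq (ρ q : ℝ) : ℝ :=
  ∫ φ in Real.arcsin (Real.sqrt ρ)..(Real.pi / 2), Real.sin φ ^ q

/-- `R_q = ρ^{q/2} √(1−ρ)`. -/
noncomputable def Rq (ρ q : ℝ) : ℝ := ρ ^ (q / 2) * Real.sqrt (1 - ρ)


lemma sqrt_mem {ρ : ℝ} (h0 : 0 < ρ) (h1 : ρ < 1) :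
    Real.sqrt ρ ∈ Set.Ioo (0:ℝ) 1 := by
  constructor
  · exact Real.sqrt_pos.2 h0
  · rw [show (1:ℝ) = Real.sqrt 1 by simp]
    exact Real.sqrt_lt_sqrt (le_of_lt h0) h1

lemma arcsin_mem {ρ : ℝ} (h0 : 0 < ρ) (h1 : ρ < 1) :
    Real.arcsin (Real.sqrt ρ) ∈ Set.Ioo (0:ℝ) (Real.pi / 2) := by
  obtain ⟨hs0, hs1⟩ := sqrt_mem h0 h1
  exact ⟨Real.arcsin_pos.2 hs0, Real.arcsin_lt_pi_div_two.2 hs1⟩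

lemma sin_pos_on {ρ : ℝ} (h0 : 0 < ρ) (h1 : ρ < 1) {φ : ℝ}
    (hφ : φ ∈ Set.uIcc (Real.arcsin (Real.sqrt ρ)) (Real.pi / 2)) :
    0 < Real.sin φ := by
  obtain ⟨ha0, haπ⟩ := arcsin_mem h0 h1
  rw [Set.uIcc_of_le haπ.le] at hφ
  refine Real.sin_pos_of_pos_of_lt_pi (lt_of_lt_of_le ha0 hφ.1) ?_
  have := Real.pi_pos
  linarith [hφ.2]

lemma contOn {ρ : ℝ} (h0 : 0 < ρ) (h1 : ρ < 1) (q : ℝ) :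
    ContinuousOn (fun φ => Real.sin φ ^ q)
      (Set.uIcc (Real.arcsin (Real.sqrt ρ)) (Real.pi / 2)) :=
  Real.continuous_sin.continuousOn.rpow_const
    (fun x hx => Or.inl (ne_of_gt (sin_pos_on h0 h1 hx)))

lemma intb {ρ : ℝ} (h0 : 0 < ρ) (h1 : ρ < 1) (q : ℝ) :
    IntervalIntegrable (fun φ => Real.sin φ ^ q) MeasureTheory.volume
      (Real.arcsin (Real.sqrt ρ)) (Real.pi / 2) :=
  (contOn h0 h1 q).intervalIntegrable

lemma sin_arcsin' {ρ : ℝ} (h0 : 0 < ρ) (h1 : ρ < 1) :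
    Real.sin (Real.arcsin (Real.sqrt ρ)) = Real.sqrt ρ :=
  Real.sin_arcsin (by linarith [Real.sqrt_nonneg ρ]) (sqrt_mem h0 h1).2.le

lemma cos_arcsin' {ρ : ℝ} (h0 : 0 < ρ) :
    Real.cos (Real.arcsin (Real.sqrt ρ)) = Real.sqrt (1 - ρ) := by
  rw [Real.cos_arcsin, Real.sq_sqrt h0.le]

lemma recurrence {ρ : ℝ} (h0 : 0 < ρ) (h1 : ρ < 1) (q : ℝ) :
    (q + 1) * Sq ρ q - (q + 2) * Sq ρ (q + 2) = -Rq ρ (q + 1) := by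
  have hab : Real.arcsin (Real.sqrt ρ) ≤ Real.pi / 2 := (arcsin_mem h0 h1).2.le
  have key : ∀ φ ∈ Set.uIcc (Real.arcsin (Real.sqrt ρ)) (Real.pi / 2),
      HasDerivAt (fun x => Real.cos x * Real.sin x ^ (q + 1))
        ((q + 1) * Real.sin φ ^ q - (q + 2) * Real.sin φ ^ (q + 2)) φ := by
    intro φ hφ
    have hs : 0 < Real.sin φ := sin_pos_on h0 h1 hφ
    have h1' : HasDerivAt (fun x => Real.sin x ^ (q + 1))
        ((q + 1) * Real.sin φ ^ (q + 1 - 1) * Real.cos φ) φ :=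
      (Real.hasDerivAt_rpow_const (Or.inl hs.ne')).comp φ (Real.hasDerivAt_sin φ)
    have h2' := (Real.hasDerivAt_cos φ).mul h1'
    refine h2'.congr_deriv (Eq.symm ?_)
    have e1 : Real.sin φ ^ (q + 1 - 1) = Real.sin φ ^ q := by norm_num
    have e2 : Real.sin φ ^ (q + 2) = Real.sin φ ^ q * Real.sin φ ^ (2:ℕ) := by
      rw [← Real.rpow_natCast (Real.sin φ) 2, ← Real.rpow_add hs]
      norm_num
    have e3 : Real.sin φ ^ (q + 1) = Real.sin φ ^ q * Real.sin φ := by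
      rw [Real.rpow_add_one hs.ne']
    have e4 : Real.cos φ ^ (2:ℕ) = 1 - Real.sin φ ^ (2:ℕ) := Real.cos_sq' φ
    rw [e1, e2, e3]
    linear_combination (-(q + 1) * Real.sin φ ^ q) * e4
  have hint : IntervalIntegrable
      (fun φ => (q + 1) * Real.sin φ ^ q - (q + 2) * Real.sin φ ^ (q + 2))
      MeasureTheory.volume (Real.arcsin (Real.sqrt ρ)) (Real.pi / 2) :=
    (((contOn h0 h1 q).const_smul (q+1)).sub
      ((contOn h0 h1 (q+2)).const_smul (q+2))).intervalIntegrable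
  have H := intervalIntegral.integral_eq_sub_of_hasDerivAt key hint
  rw [intervalIntegral.integral_sub ((intb h0 h1 q).const_mul _)
      ((intb h0 h1 (q+2)).const_mul _),
    intervalIntegral.integral_const_mul, intervalIntegral.integral_const_mul,
    Real.cos_pi_div_two, sin_arcsin' h0 h1, cos_arcsin' h0] at H
  have hr : Real.sqrt ρ ^ (q+1) = ρ ^ ((q+1)/2) := by
    rw [Real.sqrt_eq_rpow, ← Real.rpow_mul h0.le]
    ring_nf
  rw [hr] at H
  unfold Sq Rq
  linarith [H]

lemma subst {ρ : ℝ} (h0 : 0 < ρ) (h1 : ρ < 1) (q : ℝ) :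
    Iq ρ q = Sq ρ q - Sq ρ (q + 2) := by
  have hab : Real.arcsin (Real.sqrt ρ) ≤ Real.pi / 2 := (arcsin_mem h0 h1).2.le
  have hder : ∀ φ ∈ Set.uIcc (Real.arcsin (Real.sqrt ρ)) (Real.pi / 2),
      HasDerivAt Real.sin (Real.cos φ) φ := fun φ _ => Real.hasDerivAt_sin φ
  have hcos : ContinuousOn Real.cos
      (Set.uIcc (Real.arcsin (Real.sqrt ρ)) (Real.pi / 2)) :=
    Real.continuous_cos.continuousOn
  have hg : ContinuousOn (fun ξ => Real.sqrt (1 - ξ ^ 2) * ξ ^ q)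
      (Real.sin '' Set.uIcc (Real.arcsin (Real.sqrt ρ)) (Real.pi / 2)) := by
    refine ContinuousOn.mul ?_ ?_
    · exact (Real.continuous_sqrt.comp (by continuity)).continuousOn
    · refine continuousOn_id.rpow_const fun x hx => ?_
      obtain ⟨φ, hφ, rfl⟩ := hx
      exact Or.inl (sin_pos_on h0 h1 hφ).ne'
  have H := intervalIntegral.integral_comp_smul_deriv' hder hcos hg
  rw [sin_arcsin' h0 h1, Real.sin_pi_div_two] at H
  have heq : Set.EqOn
      (fun φ => Real.cos φ • ((fun ξ => Real.sqrt (1 - ξ ^ 2) * ξ ^ q) ∘ Real.sin) φ)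
      (fun φ => Real.sin φ ^ q - Real.sin φ ^ (q + 2))
      (Set.uIcc (Real.arcsin (Real.sqrt ρ)) (Real.pi / 2)) := by
    intro φ hφ
    have hs : 0 < Real.sin φ := sin_pos_on h0 h1 hφ
    have hc : 0 ≤ Real.cos φ := by
      rw [Set.uIcc_of_le hab] at hφ
      refine Real.cos_nonneg_of_mem_Icc ⟨?_, hφ.2⟩
      have := (arcsin_mem h0 h1).1
      have := Real.pi_pos
      linarith [hφ.1]
    have e1 : Real.sqrt (1 - Real.sin φ ^ 2) = Real.cos φ := by
      rw [← Real.cos_sq', Real.sqrt_sq hc]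
    have e2 : Real.sin φ ^ (q + 2) = Real.sin φ ^ q * Real.sin φ ^ (2:ℕ) := by
      rw [← Real.rpow_natCast (Real.sin φ) 2, ← Real.rpow_add hs]
      norm_num
    have e4 : Real.cos φ ^ (2:ℕ) = 1 - Real.sin φ ^ (2:ℕ) := Real.cos_sq' φ
    simp only [Function.comp, smul_eq_mul, e1, e2]
    linear_combination (Real.sin φ ^ q) * e4
  rw [intervalIntegral.integral_congr heq] at H
  rw [Iq, ← H,
    intervalIntegral.integral_sub (intb h0 h1 q) (intb h0 h1 (q+2)), Sq, Sq]


/-- Expansions of `I_{p−4}` and `I_{p−2}` in terms of `R` and `S_{p+2}`. -/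
theorem stmt11 (ρ p : ℝ) (h0 : 0 < ρ) (h1 : ρ < 1)
    (hm1 : p ≠ -1) (hp1 : p ≠ 1) (hp3 : p ≠ 3) :
    Iq ρ (p - 4) =
      -Rq ρ (p - 3) / (p - 3) - Rq ρ (p - 1) / ((p - 1) * (p - 3)) -
        p * Rq ρ (p + 1) / ((p + 1) * (p - 1) * (p - 3)) +
        (p + 2) * p * Sq ρ (p + 2) / ((p + 1) * (p - 1) * (p - 3)) ∧
    Iq ρ (p - 2) =
      -Rq ρ (p - 1) / (p - 1) - Rq ρ (p + 1) / ((p + 1) * (p - 1)) +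
        (p + 2) * Sq ρ (p + 2) / ((p + 1) * (p - 1)) := by

  have h3 : p - 3 ≠ 0 := sub_ne_zero.2 hp3
  have hm : p - 1 ≠ 0 := sub_ne_zero.2 hp1
  have hp : p + 1 ≠ 0 := by intro h; exact hm1 (by linarith)
  have e3 := recurrence h0 h1 p
  have e2 := recurrence h0 h1 (p - 2)
  rw [show p - 2 + 2 = p by ring, show p - 2 + 1 = p - 1 by ring] at e2
  have e1 := recurrence h0 h1 (p - 4)
  rw [show p - 4 + 2 = p - 2 by ring, show p - 4 + 1 = p - 3 by ring] at e1
  have c1 := subst h0 h1 (p - 4)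
  rw [show p - 4 + 2 = p - 2 by ring] at c1
  have c2 := subst h0 h1 (p - 2)
  rw [show p - 2 + 2 = p by ring] at c2
  have hSp : Sq ρ p = ((p + 2) * Sq ρ (p + 2) - Rq ρ (p + 1)) / (p + 1) := by
    field_simp
    linarith [e3]
  have hS2 : Sq ρ (p - 2) = (p * Sq ρ p - Rq ρ (p - 1)) / (p - 1) := by
    field_simp
    linarith [e2]
  have hS4 : Sq ρ (p - 4) = ((p - 2) * Sq ρ (p - 2) - Rq ρ (p - 3)) / (p - 3) := by
    field_simp
    linarith [e1]
  constructor
  · rw [c1, hS4, hS2, hSp]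
    field_simp
    ring
  · rw [c2, hS2, hSp]
    field_simp
    ring
end

section
/- Let p ∈ (−1, ∞) \ {0}, let m > 0 and let λ > 0 satisfy λ·(1+m)² ≤ 1, and define γ(z) = 1 − λ(z−m)² for −1 ≤ z ≤ 1 and γ(z) = 0 otherwise. Then for every μ with |μ| < 1: ∫_{−1}^{1} γ(z)·|z − μ|^p dz = (1/(p+1))·(1 − λ(μ−m)²)·((1+μ)^{p+1} + (1−μ)^{p+1}) + (2λ/(p+2))·(μ−m)·((1+μ)^{p+2} − (1−μ)^{p+2}) − (λ/(p+3))·((1+μ)^{p+3} + (1−μ)^{p+3}). -/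
open Real MeasureTheory intervalIntegral Set

private lemma aux_eq (k : ℕ) (q : ℝ) (hq0 : q ≠ 0) (hqk : q + (k : ℝ) ≠ 0) {t : ℝ}
    (ht : 0 ≤ t) : t ^ k * |t| ^ q = t ^ (q + (k : ℝ)) := by
  rcases eq_or_lt_of_le ht with h | h
  · rw [← h]
    rcases Nat.eq_zero_or_pos k with hk | hk
    · subst hk; simp [Real.zero_rpow hq0, Real.zero_rpow hqk]
    · simp [zero_pow hk.ne', Real.zero_rpow hqk]
  · rw [abs_of_pos h, ← Real.rpow_natCast t k, ← Real.rpow_add h, add_comm]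

private lemma aux_hqk (k : ℕ) (q : ℝ) (hq : -1 < q) (hq0 : q ≠ 0) : q + (k : ℝ) ≠ 0 := by
  rcases Nat.eq_zero_or_pos k with hk | hk
  · subst hk; simpa using hq0
  · have : (1 : ℝ) ≤ (k : ℝ) := by exact_mod_cast hk
    nlinarith

private lemma aux_int (k : ℕ) (q : ℝ) (hq : -1 < q) (hq0 : q ≠ 0) (c d : ℝ) :
    IntervalIntegrable (fun t : ℝ => t ^ k * |t| ^ q) volume c d := by
  have hqk := aux_hqk k q hq hq0
  have hqk1 : -1 < q + (k : ℝ) := by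
    have : (0 : ℝ) ≤ (k : ℝ) := Nat.cast_nonneg k
    linarith
  have H : ∀ e : ℝ, IntervalIntegrable (fun t : ℝ => t ^ k * |t| ^ q) volume 0 e := by
    intro e
    rcases le_total 0 e with he | he
    · have hg : IntervalIntegrable (fun t : ℝ => t ^ (q + (k : ℝ))) volume 0 e :=
        intervalIntegrable_rpow' hqk1
      apply hg.congr
      have hs : uIoc (0 : ℝ) e = Ioc 0 e := uIoc_of_le he
      exact fun t ht => by
          rw [hs] at ht
          exact (aux_eq k q hq0 hqk ht.1.le).symm
    · have hg : IntervalIntegrable (fun t : ℝ => t ^ (q + (k : ℝ))) volume 0 (-e) :=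
        intervalIntegrable_rpow' hqk1
      have hg2 : IntervalIntegrable (fun t : ℝ => ((-1 : ℝ)) ^ k * (-t) ^ (q + (k : ℝ)))
          volume 0 e := by
        have h2 := (IntervalIntegrable.iff_comp_neg (f := fun t : ℝ => (-1 : ℝ) ^ k * t ^ (q + (k : ℝ))) (a := 0) (b := -e)).mp (hg.const_mul ((-1 : ℝ) ^ k))
        simpa using h2
      apply hg2.congr
      have hs : uIoc (0 : ℝ) e = Ioc e 0 := uIoc_of_ge he
      intro t ht
      rw [hs] at ht
      have ht0 : 0 ≤ -t := by linarith [ht.2]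
      have := aux_eq k q hq0 hqk ht0
      calc ((-1 : ℝ)) ^ k * (-t) ^ (q + (k : ℝ)) = ((-1 : ℝ)) ^ k * ((-t) ^ k * |(-t)| ^ q) := by
            rw [this]
        _ = ((-1 : ℝ) * -t) ^ k * |t| ^ q := by rw [abs_neg, mul_pow]; ring
        _ = t ^ k * |t| ^ q := by norm_num
  exact (H c).symm.trans (H d)

private lemma aux_half (k : ℕ) (q : ℝ) (hq : -1 < q) (hq0 : q ≠ 0) {b : ℝ} (hb : 0 ≤ b) :
    ∫ t in (0 : ℝ)..b, t ^ k * |t| ^ q = b ^ (q + (k : ℝ) + 1) / (q + (k : ℝ) + 1) := by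
  have hqk := aux_hqk k q hq hq0
  have hqk1 : -1 < q + (k : ℝ) := by
    have : (0 : ℝ) ≤ (k : ℝ) := Nat.cast_nonneg k
    linarith
  have hcong : EqOn (fun t : ℝ => t ^ k * |t| ^ q) (fun t : ℝ => t ^ (q + (k : ℝ)))
      (uIcc 0 b) := by
    intro t ht
    rw [uIcc_of_le hb] at ht
    exact aux_eq k q hq0 hqk ht.1
  rw [intervalIntegral.integral_congr hcong, integral_rpow (Or.inl hqk1),
    Real.zero_rpow (by linarith : q + (k : ℝ) + 1 ≠ 0)]
  ring

private lemma aux_full (k : ℕ) (q : ℝ) (hq : -1 < q) (hq0 : q ≠ 0) {a b : ℝ}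
    (ha : 0 ≤ a) (hb : 0 ≤ b) :
    ∫ t in (-a)..b, t ^ k * |t| ^ q =
      (b ^ (q + (k : ℝ) + 1) + (-1 : ℝ) ^ k * a ^ (q + (k : ℝ) + 1)) / (q + (k : ℝ) + 1) := by
  have h1 : ∫ t in (-a)..(0 : ℝ), t ^ k * |t| ^ q
      = (-1 : ℝ) ^ k * (a ^ (q + (k : ℝ) + 1) / (q + (k : ℝ) + 1)) := by
    have hneg := intervalIntegral.integral_comp_neg (a := (0 : ℝ)) (b := a)
      (fun t : ℝ => t ^ k * |t| ^ q)
    simp only [neg_zero] at hneg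
    rw [← hneg]
    have : ∀ x : ℝ, (-x) ^ k * |(-x)| ^ q = (-1 : ℝ) ^ k * (x ^ k * |x| ^ q) := by
      intro x; rw [abs_neg]; ring
    simp_rw [this]
    rw [intervalIntegral.integral_const_mul, aux_half k q hq hq0 ha]
  have h2 := aux_half k q hq hq0 hb
  rw [← intervalIntegral.integral_add_adjacent_intervals (aux_int k q hq hq0 (-a) 0)
    (aux_int k q hq hq0 0 b), h1, h2]
  ring

/-- Closed-form evaluation of the order-`p` mean objective for the toy density
`γ(z) = 1 − λ(z−m)²` on `[−1,1]`. -/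
theorem stmt12 (p m lam μ : ℝ) (hp : -1 < p) (hp0 : p ≠ 0) (hm : 0 < m)
    (hlam : 0 < lam) (hconstr : lam * (1 + m) ^ 2 ≤ 1) (hμ : |μ| < 1) :
    ∫ z in (-1 : ℝ)..1, (1 - lam * (z - m) ^ 2) * |z - μ| ^ p =
      1 / (p + 1) * (1 - lam * (μ - m) ^ 2) *
          ((1 + μ) ^ (p + 1) + (1 - μ) ^ (p + 1)) +
        2 * lam / (p + 2) * (μ - m) * ((1 + μ) ^ (p + 2) - (1 - μ) ^ (p + 2)) -
        lam / (p + 3) * ((1 + μ) ^ (p + 3) + (1 - μ) ^ (p + 3)) := by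
  obtain ⟨hμ1, hμ2⟩ := abs_lt.mp hμ
  have ha : (0 : ℝ) ≤ 1 + μ := by linarith
  have hb : (0 : ℝ) ≤ 1 - μ := by linarith
  have key : ∀ k : ℕ, ∫ z in (-1 : ℝ)..1, (z - μ) ^ k * |z - μ| ^ p =
      ((1 - μ) ^ (p + (k : ℝ) + 1) + (-1 : ℝ) ^ k * (1 + μ) ^ (p + (k : ℝ) + 1)) /
        (p + (k : ℝ) + 1) := by
    intro k
    have h := intervalIntegral.integral_comp_sub_right (a := (-1 : ℝ)) (b := 1)
      (fun t : ℝ => t ^ k * |t| ^ p) μ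
    rw [h, show (-1 : ℝ) - μ = -(1 + μ) by ring]
    exact aux_full k p hp hp0 ha hb
  have hik : ∀ k : ℕ, IntervalIntegrable (fun z : ℝ => (z - μ) ^ k * |z - μ| ^ p)
      volume (-1) 1 := by
    intro k
    have := (aux_int k p hp hp0 (-1 - μ) (1 - μ)).comp_sub_right μ
    have he1 : (-1 : ℝ) - μ + μ = -1 := by ring
    have he2 : (1 : ℝ) - μ + μ = 1 := by ring
    rw [he1, he2] at this
    exact this
  have hcong : EqOn (fun z : ℝ => (1 - lam * (z - m) ^ 2) * |z - μ| ^ p)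
      (fun z : ℝ => (1 - lam * (μ - m) ^ 2) * ((z - μ) ^ 0 * |z - μ| ^ p) +
        (-2 * lam * (μ - m)) * ((z - μ) ^ 1 * |z - μ| ^ p) +
        (-lam) * ((z - μ) ^ 2 * |z - μ| ^ p)) (uIcc (-1) 1) := by
    intro z _
    simp only
    ring
  rw [intervalIntegral.integral_congr hcong,
    intervalIntegral.integral_add (((hik 0).const_mul _).add ((hik 1).const_mul _))
      ((hik 2).const_mul _),
    intervalIntegral.integral_add ((hik 0).const_mul _) ((hik 1).const_mul _),
    intervalIntegral.integral_const_mul, intervalIntegral.integral_const_mul,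
    intervalIntegral.integral_const_mul, key 0, key 1, key 2]
  push_cast
  rw [show p + 0 + 1 = p + 1 by ring, show p + 1 + 1 = p + 2 by ring,
    show p + 2 + 1 = p + 3 by ring]
  have h1 : p + 1 ≠ 0 := by linarith
  have h2 : p + 2 ≠ 0 := by linarith
  have h3 : p + 3 ≠ 0 := by linarith
  field_simp
  ring
end

section
/- Fix p ∈ (−1, ∞) \ {0} and λ ∈ (0, 1). There exist m₀ > 0 and C > 0 such that for every m with 0 < m < m₀ (so that in particular λ(1+m)² ≤ 1), every minimiser μ* over μ ∈ ℝ of the function μ ↦ sgn(p)·∫_{−1}^{1} (1 − λ(z−m)²)·|z − μ|^p dz satisfies |μ* − 2λm/((p+1) − (p−1)λ)| ≤ C·m³. In particular, for fixed λ the leading coefficient 2λ/((p+1) − (p−1)λ) tends to 1 as p → −1⁺ (the minimiser approaches the mode m) and tends to 2λ/(1+λ) < 1 as p → 0 (the minimiser does not approach the mode). -/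
set_option maxHeartbeats 1000000

open Filter

noncomputable section Stmt13Aux

def ff (p lam m μ : ℝ) : ℝ :=
  (1 - lam*(μ-m)^2) * ((1+μ)^(p+1) + (1-μ)^(p+1))/(p+1)
  + 2*lam*(μ-m)*((1+μ)^(p+2) - (1-μ)^(p+2))/(p+2)
  - lam*((1+μ)^(p+3) + (1-μ)^(p+3))/(p+3)

def EE (p lam m μ : ℝ) : ℝ :=
  (1 - lam*(μ-m)^2) * ((1+μ)^p - (1-μ)^p)
  + (2*lam*p/(p+1))*(μ-m)*((1+μ)^(p+1) + (1-μ)^(p+1))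
  - (lam*p/(p+2))*((1+μ)^(p+2) - (1-μ)^(p+2))

def EE1 (p lam m μ : ℝ) : ℝ :=
  (1 - lam*(μ-m)^2)*p*((1+μ)^(p-1) + (1-μ)^(p-1))
  + 2*lam*(p-1)*(μ-m)*((1+μ)^p - (1-μ)^p)
  - lam*p*(p-1)/(p+1)*((1+μ)^(p+1) + (1-μ)^(p+1))

lemma hasDerivAt_affq (a c q x : ℝ) (h : a + c*x ≠ 0) :
    HasDerivAt (fun t : ℝ => (a + c*t)^q) (q*(a+c*x)^(q-1)*c) x := by
  have h1 : HasDerivAt (fun t : ℝ => a + c*t) c x := by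
    simpa using ((hasDerivAt_id x).const_mul c).const_add a
  exact (Real.hasDerivAt_rpow_const (p := q) (Or.inl h)).comp x h1

lemma hasDerivAt_u (q μ : ℝ) (h : (0:ℝ) < 1 + μ) :
    HasDerivAt (fun x : ℝ => (1+x)^q) (q*(1+μ)^(q-1)) μ := by
  simpa using hasDerivAt_affq 1 1 q μ (by simpa using h.ne')

lemma hasDerivAt_v (q μ : ℝ) (h : (0:ℝ) < 1 - μ) :
    HasDerivAt (fun x : ℝ => (1-x)^q) (-(q*(1-μ)^(q-1))) μ := by
  have h' : (1:ℝ) + (-1)*μ ≠ 0 := by rw [neg_one_mul, ← sub_eq_add_neg]; exact h.ne'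
  have := hasDerivAt_affq 1 (-1) q μ h'
  simpa only [neg_one_mul, ← sub_eq_add_neg, mul_neg_one] using this

variable {p lam : ℝ}

lemma ff_hasDeriv (hp : -1 < p) (m μ : ℝ) (h1 : -1 < μ) (h2 : μ < 1) :
    HasDerivAt (fun x => ff p lam m x) (EE p lam m μ) μ := by
  have hu : (0:ℝ) < 1 + μ := by linarith
  have hv : (0:ℝ) < 1 - μ := by linarith
  have hA : HasDerivAt (fun x : ℝ => 1 - lam*(x-m)^2) (-(lam*(2*(μ-m)))) μ := by
    have h0 : HasDerivAt (fun x : ℝ => (x-m)^2) (2*(μ-m)) μ := by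
      simpa using ((hasDerivAt_id μ).sub_const m).fun_pow 2
    simpa using (h0.const_mul lam).const_sub 1
  have hS1 : HasDerivAt (fun x : ℝ => (1+x)^(p+1) + (1-x)^(p+1))
      ((p+1)*(1+μ)^(p+1-1) + -((p+1)*(1-μ)^(p+1-1))) μ :=
    (hasDerivAt_u (p+1) μ hu).add (hasDerivAt_v (p+1) μ hv)
  have hT2 : HasDerivAt (fun x : ℝ => (1+x)^(p+2) - (1-x)^(p+2))
      ((p+2)*(1+μ)^(p+2-1) - -((p+2)*(1-μ)^(p+2-1))) μ :=
    (hasDerivAt_u (p+2) μ hu).sub (hasDerivAt_v (p+2) μ hv)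
  have hS3 : HasDerivAt (fun x : ℝ => (1+x)^(p+3) + (1-x)^(p+3))
      ((p+3)*(1+μ)^(p+3-1) + -((p+3)*(1-μ)^(p+3-1))) μ :=
    (hasDerivAt_u (p+3) μ hu).add (hasDerivAt_v (p+3) μ hv)
  have hB : HasDerivAt (fun x : ℝ => 2*lam*(x-m)) (2*lam) μ := by
    simpa using ((hasDerivAt_id μ).sub_const m).const_mul (2*lam)
  have hmain := (((hA.mul hS1).div_const (p+1)).add
      (((hB.mul hT2).div_const (p+2)))).sub ((hS3.const_mul lam).div_const (p+3))
  unfold ff EE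
  refine hmain.congr_deriv (Eq.symm ?_)
  rw [show p+1-1 = p from by ring, show p+2-1 = p+1 from by ring, show p+3-1 = p+2 from by ring]
  have e1 : (p:ℝ)+1 ≠ 0 := by linarith
  have e2 : (p:ℝ)+2 ≠ 0 := by linarith
  have e3 : (p:ℝ)+3 ≠ 0 := by linarith
  field_simp
  ring

lemma EE_hasDeriv (hp : -1 < p) (m μ : ℝ) (h1 : -1 < μ) (h2 : μ < 1) :
    HasDerivAt (fun x => EE p lam m x) (EE1 p lam m μ) μ := by
  have hu : (0:ℝ) < 1 + μ := by linarith
  have hv : (0:ℝ) < 1 - μ := by linarith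
  have hA : HasDerivAt (fun x : ℝ => 1 - lam*(x-m)^2) (-(lam*(2*(μ-m)))) μ := by
    have h0 : HasDerivAt (fun x : ℝ => (x-m)^2) (2*(μ-m)) μ := by
      simpa using ((hasDerivAt_id μ).sub_const m).fun_pow 2
    simpa using (h0.const_mul lam).const_sub 1
  have hT0 : HasDerivAt (fun x : ℝ => (1+x)^p - (1-x)^p)
      (p*(1+μ)^(p-1) - -(p*(1-μ)^(p-1))) μ :=
    (hasDerivAt_u p μ hu).sub (hasDerivAt_v p μ hv)
  have hS1 : HasDerivAt (fun x : ℝ => (1+x)^(p+1) + (1-x)^(p+1))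
      ((p+1)*(1+μ)^(p+1-1) + -((p+1)*(1-μ)^(p+1-1))) μ :=
    (hasDerivAt_u (p+1) μ hu).add (hasDerivAt_v (p+1) μ hv)
  have hT2 : HasDerivAt (fun x : ℝ => (1+x)^(p+2) - (1-x)^(p+2))
      ((p+2)*(1+μ)^(p+2-1) - -((p+2)*(1-μ)^(p+2-1))) μ :=
    (hasDerivAt_u (p+2) μ hu).sub (hasDerivAt_v (p+2) μ hv)
  have hB : HasDerivAt (fun x : ℝ => (2*lam*p/(p+1))*(x-m)) (2*lam*p/(p+1)) μ := by
    simpa using ((hasDerivAt_id μ).sub_const m).const_mul (2*lam*p/(p+1))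
  have hmain := ((hA.mul hT0).add (hB.mul hS1)).sub (hT2.const_mul (lam*p/(p+2)))
  unfold EE EE1
  refine hmain.congr_deriv (Eq.symm ?_)
  rw [show p+1-1 = p from by ring, show p+2-1 = p+1 from by ring]
  have e1 : (p:ℝ)+1 ≠ 0 := by linarith
  have e2 : (p:ℝ)+2 ≠ 0 := by linarith
  field_simp
  ring

lemma EE_reflect (m μ : ℝ) : EE p lam (-m) (-μ) = - EE p lam m μ := by
  unfold EE
  have h1 : (1:ℝ) + -μ = 1 - μ := by ring
  have h2 : (1:ℝ) - -μ = 1 + μ := by ring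
  rw [h1, h2]
  ring


lemma hasDerivAt_sub_const_rpow (μ q z : ℝ) (h : z - μ ≠ 0) :
    HasDerivAt (fun t : ℝ => (t-μ)^q) (q*(z-μ)^(q-1)) z := by
  simpa [Function.comp_def] using (Real.hasDerivAt_rpow_const (p := q) (Or.inl h)).comp z ((hasDerivAt_id z).sub_const μ)

lemma hasDerivAt_const_sub_rpow (μ q z : ℝ) (h : μ - z ≠ 0) :
    HasDerivAt (fun t : ℝ => (μ-t)^q) (-(q*(μ-z)^(q-1))) z := by
  have h1 : HasDerivAt (fun t : ℝ => μ - t) (-1) z := by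
    simpa using (hasDerivAt_id z).const_sub μ
  have := (Real.hasDerivAt_rpow_const (p := q) (Or.inl h)).comp z h1
  refine this.congr_deriv ?_; ring

lemma continuous_sub_const_rpow (μ q : ℝ) (hq : 0 < q) :
    Continuous (fun t : ℝ => (t-μ)^q) := by
  have h1 : Continuous (fun t : ℝ => t^q) :=
    continuous_iff_continuousAt.mpr fun t => Real.continuousAt_rpow_const t q (Or.inr hq.le)
  exact h1.comp (continuous_id.sub continuous_const)

lemma continuous_const_sub_rpow (μ q : ℝ) (hq : 0 < q) :
    Continuous (fun t : ℝ => (μ-t)^q) := by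
  have h1 : Continuous (fun t : ℝ => t^q) :=
    continuous_iff_continuousAt.mpr fun t => Real.continuousAt_rpow_const t q (Or.inr hq.le)
  exact h1.comp (continuous_const.sub continuous_id)

lemma continuous_one_add_rpow (q : ℝ) (hq : 0 < q) :
    Continuous (fun t : ℝ => (1+t)^q) := by
  have h1 : Continuous (fun t : ℝ => t^q) :=
    continuous_iff_continuousAt.mpr fun t => Real.continuousAt_rpow_const t q (Or.inr hq.le)
  exact h1.comp (continuous_const.add continuous_id)

lemma intInt_right (hp : -1 < p) (m ν a b : ℝ) (h : ∀ z ∈ Set.uIoc a b, ν ≤ z) :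
    IntervalIntegrable (fun z => (1 - lam*(z-m)^2) * |z-ν|^p) MeasureTheory.volume a b := by
  have h0 : IntervalIntegrable (fun z : ℝ => (z-ν)^p) MeasureTheory.volume a b := by
    simpa using (intervalIntegral.intervalIntegrable_rpow' (a := a - ν) (b := b - ν) hp).comp_sub_right ν
  have h1 := h0.continuousOn_mul (g := fun z => 1 - lam*(z-m)^2)
    (by fun_prop : ContinuousOn (fun z : ℝ => 1 - lam*(z-m)^2) (Set.uIcc a b))
  refine h1.congr ?_
  refine (fun z hz => ?_)
  have : |z - ν| = z - ν := abs_of_nonneg (by linarith [h z hz])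
  simp only [this]

lemma intInt_left (hp : -1 < p) (m ν a b : ℝ) (h : ∀ z ∈ Set.uIoc a b, z ≤ ν) :
    IntervalIntegrable (fun z => (1 - lam*(z-m)^2) * |z-ν|^p) MeasureTheory.volume a b := by
  have h0 : IntervalIntegrable (fun z : ℝ => (ν-z)^p) MeasureTheory.volume a b := by
    simpa using (intervalIntegral.intervalIntegrable_rpow' (a := ν - a) (b := ν - b) hp).comp_sub_left ν
  have h1 := h0.continuousOn_mul (g := fun z => 1 - lam*(z-m)^2)
    (by fun_prop : ContinuousOn (fun z : ℝ => 1 - lam*(z-m)^2) (Set.uIcc a b))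
  refine h1.congr ?_
  refine (fun z hz => ?_)
  have : |z - ν| = ν - z := by
    rw [abs_sub_comm]; exact abs_of_nonneg (by linarith [h z hz])
  simp only [this]

lemma intInt_all (hp : -1 < p) (m ν : ℝ) :
    IntervalIntegrable (fun z => (1 - lam*(z-m)^2) * |z-ν|^p) MeasureTheory.volume (-1) 1 := by
  set pt := min 1 (max (-1) ν) with hpt
  have hpt1 : -1 ≤ pt := by simp [hpt]
  have hpt2 : pt ≤ 1 := min_le_left _ _
  have hL : IntervalIntegrable (fun z => (1 - lam*(z-m)^2) * |z-ν|^p) MeasureTheory.volume (-1) pt := by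
    apply intInt_left hp
    intro z hz
    rw [Set.uIoc_of_le hpt1] at hz
    rcases le_or_gt (-1) ν with hc | hc
    · have hptν : pt ≤ ν := by
        rcases le_or_gt ν 1 with hd | hd
        · rw [hpt, max_eq_right hc, min_eq_right hd]
        · rw [hpt]; refine le_trans (min_le_left _ _) hd.le
      linarith [hz.2]
    · have hpe : pt = -1 := by rw [hpt, max_eq_left hc.le]; exact min_eq_right (by linarith)
      rw [hpe] at hz
      exact absurd hz.1 (by linarith [hz.2])
  have hR : IntervalIntegrable (fun z => (1 - lam*(z-m)^2) * |z-ν|^p) MeasureTheory.volume pt 1 := by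
    apply intInt_right hp
    intro z hz
    rw [Set.uIoc_of_le hpt2] at hz
    rcases le_or_gt ν 1 with hc | hc
    · have hptν : ν ≤ pt := by
        rcases le_or_gt (-1) ν with hd | hd
        · rw [hpt, max_eq_right hd, min_eq_right hc]
        · rw [hpt]; refine le_trans hd.le (le_min (by linarith) (le_max_left _ _))
      linarith [hz.1]
    · have hpe : pt = 1 := by
        rw [hpt, max_eq_right (by linarith : (-1:ℝ) ≤ ν)]; exact min_eq_left (by linarith)
      rw [hpe] at hz
      exact absurd hz.1 (by linarith [hz.2])
  exact hL.trans hR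

lemma integral_right (hp : -1 < p) (m μ : ℝ) (h1 : -1 ≤ μ) (h2 : μ ≤ 1) :
    ∫ z in μ..1, (1 - lam*(z-m)^2) * |z-μ|^p =
      (1 - lam*(μ-m)^2)*(1-μ)^(p+1)/(p+1) - 2*lam*(μ-m)*(1-μ)^(p+2)/(p+2)
        - lam*(1-μ)^(p+3)/(p+3) := by
  have e1 : (p:ℝ)+1 ≠ 0 := by linarith
  have e2 : (p:ℝ)+2 ≠ 0 := by linarith
  have e3 : (p:ℝ)+3 ≠ 0 := by linarith
  set A := 1 - lam*(μ-m)^2 with hA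
  set Φ : ℝ → ℝ := fun z =>
    A*(z-μ)^(p+1)/(p+1) - 2*lam*(μ-m)*(z-μ)^(p+2)/(p+2) - lam*(z-μ)^(p+3)/(p+3) with hΦ
  have hcont : ContinuousOn Φ (Set.Icc μ 1) := by
    apply Continuous.continuousOn
    exact (((continuous_const.mul (continuous_sub_const_rpow μ (p+1) (by linarith))).div_const (p+1)).sub
      ((continuous_const.mul (continuous_sub_const_rpow μ (p+2) (by linarith))).div_const (p+2))).sub
      ((continuous_const.mul (continuous_sub_const_rpow μ (p+3) (by linarith))).div_const (p+3))
  have hderiv : ∀ z ∈ Set.Ioo μ 1, HasDerivWithinAt Φ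
      ((1 - lam*(z-m)^2) * (z-μ)^p) (Set.Ioi z) z := by
    intro z hz
    have hzμ : z - μ ≠ 0 := by have := hz.1; intro hcon; nlinarith [hz.1]
    have hzμ' : (0:ℝ) < z - μ := by linarith [hz.1]
    have hd : HasDerivAt Φ (A*((p+1)*(z-μ)^(p+1-1))/(p+1)
        - 2*lam*(μ-m)*((p+2)*(z-μ)^(p+2-1))/(p+2) - lam*((p+3)*(z-μ)^(p+3-1))/(p+3)) z := by
      exact (((hasDerivAt_sub_const_rpow μ (p+1) z hzμ).const_mul A).div_const (p+1)).sub
        (((hasDerivAt_sub_const_rpow μ (p+2) z hzμ).const_mul (2*lam*(μ-m))).div_const (p+2))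
        |>.sub (((hasDerivAt_sub_const_rpow μ (p+3) z hzμ).const_mul lam).div_const (p+3))
    have heq : A*((p+1)*(z-μ)^(p+1-1))/(p+1)
        - 2*lam*(μ-m)*((p+2)*(z-μ)^(p+2-1))/(p+2) - lam*((p+3)*(z-μ)^(p+3-1))/(p+3)
        = (1 - lam*(z-m)^2) * (z-μ)^p := by
      rw [show p+1-1 = p from by ring, show p+2-1 = p+1 from by ring,
        show p+3-1 = p+2 from by ring]
      have E1 : (z-μ)^(p+1) = (z-μ)^p * (z-μ) := Real.rpow_add_one hzμ p
      have E2 : (z-μ)^(p+2) = (z-μ)^p * (z-μ)^2 := by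
        rw [show (p:ℝ)+2 = p+1+1 from by ring, Real.rpow_add_one hzμ, E1]; ring
      rw [E2, E1]
      field_simp
      ring
    rw [heq] at hd
    exact hd.hasDerivWithinAt
  have hint : IntervalIntegrable (fun z => (1 - lam*(z-m)^2) * (z-μ)^p)
      MeasureTheory.volume μ 1 := by
    have h0 := intInt_right (lam := lam) hp m μ μ 1 (fun z hz => by
      rw [Set.uIoc_of_le h2] at hz; exact hz.1.le)
    refine h0.congr ?_
    refine (fun z hz => ?_)
    rw [Set.uIoc_of_le h2] at hz
    have : |z - μ| = z - μ := abs_of_nonneg (by linarith [hz.1])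
    simp only [this]
  have hFTC := intervalIntegral.integral_eq_sub_of_hasDeriv_right_of_le h2 hcont hderiv hint
  have hcongr : ∫ z in μ..1, (1 - lam*(z-m)^2) * |z-μ|^p
      = ∫ z in μ..1, (1 - lam*(z-m)^2) * (z-μ)^p := by
    apply intervalIntegral.integral_congr
    intro z hz
    rw [Set.uIcc_of_le h2] at hz
    have : |z - μ| = z - μ := abs_of_nonneg (by linarith [hz.1])
    simp only [this]
  rw [hcongr, hFTC]
  simp only [hΦ, sub_self]
  rw [Real.zero_rpow (by linarith : (p:ℝ)+1 ≠ 0), Real.zero_rpow (by linarith : (p:ℝ)+2 ≠ 0),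
    Real.zero_rpow (by linarith : (p:ℝ)+3 ≠ 0)]
  ring


lemma integral_left (hp : -1 < p) (m μ : ℝ) (h1 : -1 ≤ μ) (h2 : μ ≤ 1) :
    ∫ z in (-1:ℝ)..μ, (1 - lam*(z-m)^2) * |z-μ|^p =
      (1 - lam*(μ-m)^2)*(1+μ)^(p+1)/(p+1) + 2*lam*(μ-m)*(1+μ)^(p+2)/(p+2)
        - lam*(1+μ)^(p+3)/(p+3) := by
  have e1 : (p:ℝ)+1 ≠ 0 := by linarith
  have e2 : (p:ℝ)+2 ≠ 0 := by linarith
  have e3 : (p:ℝ)+3 ≠ 0 := by linarith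
  set A := 1 - lam*(μ-m)^2 with hA
  set Ψ : ℝ → ℝ := fun z =>
    -(A*(μ-z)^(p+1))/(p+1) - 2*lam*(μ-m)*(μ-z)^(p+2)/(p+2) + lam*(μ-z)^(p+3)/(p+3) with hΨ
  have hcont : ContinuousOn Ψ (Set.Icc (-1) μ) := by
    apply Continuous.continuousOn
    exact ((((continuous_const.mul (continuous_const_sub_rpow μ (p+1) (by linarith))).neg).div_const (p+1)).sub
      ((continuous_const.mul (continuous_const_sub_rpow μ (p+2) (by linarith))).div_const (p+2))).add
      ((continuous_const.mul (continuous_const_sub_rpow μ (p+3) (by linarith))).div_const (p+3))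
  have hderiv : ∀ z ∈ Set.Ioo (-1:ℝ) μ, HasDerivWithinAt Ψ
      ((1 - lam*(z-m)^2) * (μ-z)^p) (Set.Ioi z) z := by
    intro z hz
    have hzμ : μ - z ≠ 0 := by have := hz.2; intro hcon; nlinarith [hz.2]
    have hd : HasDerivAt Ψ (-(A*(-((p+1)*(μ-z)^(p+1-1))))/(p+1)
        - 2*lam*(μ-m)*(-((p+2)*(μ-z)^(p+2-1)))/(p+2)
        + lam*(-((p+3)*(μ-z)^(p+3-1)))/(p+3)) z := by
      exact ((((hasDerivAt_const_sub_rpow μ (p+1) z hzμ).const_mul A).neg.div_const (p+1)).sub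
        (((hasDerivAt_const_sub_rpow μ (p+2) z hzμ).const_mul (2*lam*(μ-m))).div_const (p+2))).add
        (((hasDerivAt_const_sub_rpow μ (p+3) z hzμ).const_mul lam).div_const (p+3))
    have heq : -(A*(-((p+1)*(μ-z)^(p+1-1))))/(p+1)
        - 2*lam*(μ-m)*(-((p+2)*(μ-z)^(p+2-1)))/(p+2)
        + lam*(-((p+3)*(μ-z)^(p+3-1)))/(p+3)
        = (1 - lam*(z-m)^2) * (μ-z)^p := by
      rw [show p+1-1 = p from by ring, show p+2-1 = p+1 from by ring,
        show p+3-1 = p+2 from by ring]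
      have E1 : (μ-z)^(p+1) = (μ-z)^p * (μ-z) := Real.rpow_add_one hzμ p
      have E2 : (μ-z)^(p+2) = (μ-z)^p * (μ-z)^2 := by
        rw [show (p:ℝ)+2 = p+1+1 from by ring, Real.rpow_add_one hzμ, E1]; ring
      rw [E2, E1]
      field_simp
      ring
    rw [heq] at hd
    exact hd.hasDerivWithinAt
  have hint : IntervalIntegrable (fun z => (1 - lam*(z-m)^2) * (μ-z)^p)
      MeasureTheory.volume (-1) μ := by
    have h0 := intInt_left (lam := lam) hp m μ (-1) μ (fun z hz => by
      rw [Set.uIoc_of_le h1] at hz; exact hz.2)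
    refine h0.congr ?_
    refine (fun z hz => ?_)
    rw [Set.uIoc_of_le h1] at hz
    have : |z - μ| = μ - z := by
      rw [abs_sub_comm]; exact abs_of_nonneg (by linarith [hz.2])
    simp only [this]
  have hFTC := intervalIntegral.integral_eq_sub_of_hasDeriv_right_of_le h1 hcont hderiv hint
  have hcongr : ∫ z in (-1:ℝ)..μ, (1 - lam*(z-m)^2) * |z-μ|^p
      = ∫ z in (-1:ℝ)..μ, (1 - lam*(z-m)^2) * (μ-z)^p := by
    apply intervalIntegral.integral_congr
    intro z hz
    rw [Set.uIcc_of_le h1] at hz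
    have : |z - μ| = μ - z := by
      rw [abs_sub_comm]; exact abs_of_nonneg (by linarith [hz.2])
    simp only [this]
  rw [hcongr, hFTC]
  simp only [hΨ, sub_self]
  rw [Real.zero_rpow (by linarith : (p:ℝ)+1 ≠ 0), Real.zero_rpow (by linarith : (p:ℝ)+2 ≠ 0),
    Real.zero_rpow (by linarith : (p:ℝ)+3 ≠ 0),
    show μ - (-1:ℝ) = 1 + μ from by ring]
  ring

lemma ff_eq (hp : -1 < p) (m μ : ℝ) (h1 : -1 ≤ μ) (h2 : μ ≤ 1) :
    ∫ z in (-1:ℝ)..1, (1 - lam*(z-m)^2) * |z-μ|^p = ff p lam m μ := by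
  have hL := intInt_left (lam := lam) hp m μ (-1) μ (fun z hz => by
    rw [Set.uIoc_of_le h1] at hz; exact hz.2)
  have hR := intInt_right (lam := lam) hp m μ μ 1 (fun z hz => by
    rw [Set.uIoc_of_le h2] at hz; exact hz.1.le)
  rw [← intervalIntegral.integral_add_adjacent_intervals hL hR,
    integral_left hp m μ h1 h2, integral_right hp m μ h1 h2]
  unfold ff
  ring


lemma EE_decomp (hp : -1 < p) (m μ : ℝ) (hu : (0:ℝ) < 1+μ) (hv : (0:ℝ) < 1-μ) :
    EE p lam m μ = (1-lam+lam*(2*μ*m-m^2))*((1+μ)^p-(1-μ)^p)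
      + (lam/(p+1))*((1+μ)*(1-μ))*((1+μ)^p-(1-μ)^p)
      + (lam*p/((p+1)*(p+2)))*((1+μ)^2*(1+μ)^p-(1-μ)^2*(1-μ)^p)
      - (2*lam*p*m/(p+1))*((1+μ)*(1+μ)^p+(1-μ)*(1-μ)^p) := by
  have e1 : (p:ℝ)+1 ≠ 0 := by linarith
  have e2 : (p:ℝ)+2 ≠ 0 := by linarith
  have E1u : (1+μ)^(p+1) = (1+μ)^p * (1+μ) := Real.rpow_add_one hu.ne' p
  have E2u : (1+μ)^(p+2) = (1+μ)^p * (1+μ)^2 := by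
    rw [show (p:ℝ)+2 = p+1+1 from by ring, Real.rpow_add_one hu.ne', E1u]; ring
  have E1v : (1-μ)^(p+1) = (1-μ)^p * (1-μ) := Real.rpow_add_one hv.ne' p
  have E2v : (1-μ)^(p+2) = (1-μ)^p * (1-μ)^2 := by
    rw [show (p:ℝ)+2 = p+1+1 from by ring, Real.rpow_add_one hv.ne', E1v]; ring
  unfold EE
  rw [E1u, E2u, E1v, E2v]
  field_simp
  ring

/-- positivity of the sign-corrected second derivative near the origin -/
lemma EE1_pos_near (hp : -1 < p) (hp0 : p ≠ 0) (hlam0 : 0 < lam) (hlam1 : lam < 1) :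
    ∃ r c : ℝ, 0 < r ∧ r ≤ 1/2 ∧ 0 < c ∧
      ∀ m μ : ℝ, |m| ≤ r → |μ| ≤ r → c ≤ Real.sign p * EE1 p lam m μ := by
  have hD : 0 < (p+1) - (p-1)*lam := by nlinarith
  have e1 : (0:ℝ) < p+1 := by linarith
  set V : ℝ := 2*p*((p+1) - (p-1)*lam)/(p+1) with hV
  set s : ℝ := Real.sign p with hs
  have hsV : 0 < s * V := by
    rcases lt_or_gt_of_ne hp0 with hneg | hpos
    · rw [hs, Real.sign_of_neg hneg]
      have : V < 0 := by
        apply div_neg_of_neg_of_pos _ e1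
        have : 2*p < 0 := by linarith
        exact mul_neg_of_neg_of_pos this hD
      nlinarith
    · rw [hs, Real.sign_of_pos hpos]
      have : 0 < V := by positivity
      nlinarith
  have hV00 : EE1 p lam 0 0 = V := by
    unfold EE1
    rw [show (1:ℝ)+0 = 1 from by ring, show (1:ℝ)-0 = 1 from by ring]
    simp [Real.one_rpow, hV]
    field_simp
    ring
  have hcont : ContinuousAt (fun x : ℝ × ℝ => EE1 p lam x.1 x.2) (0, 0) := by
    have hb1 : ContinuousAt (fun x : ℝ × ℝ => 1 + x.2) ((0:ℝ), (0:ℝ)) := by fun_prop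
    have hb2 : ContinuousAt (fun x : ℝ × ℝ => 1 - x.2) ((0:ℝ), (0:ℝ)) := by fun_prop
    have hr1 : (fun x : ℝ × ℝ => 1 + x.2) ((0:ℝ),(0:ℝ)) ≠ 0 := by norm_num
    have hr2 : (fun x : ℝ × ℝ => 1 - x.2) ((0:ℝ),(0:ℝ)) ≠ 0 := by norm_num
    unfold EE1
    exact (((by fun_prop : ContinuousAt (fun x : ℝ × ℝ => (1 - lam*(x.2-x.1)^2)*p) ((0:ℝ),(0:ℝ))).mul
        ((hb1.rpow_const (Or.inl hr1)).add (hb2.rpow_const (Or.inl hr2)))).add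
      ((by fun_prop : ContinuousAt (fun x : ℝ × ℝ => 2*lam*(p-1)*(x.2-x.1)) ((0:ℝ),(0:ℝ))).mul
        ((hb1.rpow_const (Or.inl hr1)).sub (hb2.rpow_const (Or.inl hr2))))).sub
      (ContinuousAt.mul (by fun_prop)
        ((hb1.rpow_const (Or.inl hr1)).add (hb2.rpow_const (Or.inl hr2))))
  rw [Metric.continuousAt_iff] at hcont
  obtain ⟨δ, hδ0, hδ⟩ := hcont (s*V/2) (by linarith)
  refine ⟨min (δ/2) (1/2), s*V/2, by positivity, min_le_right _ _, by linarith, ?_⟩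
  intro m μ hm hμ
  have hdist : dist ((m,μ) : ℝ × ℝ) (0,0) < δ := by
    rw [Prod.dist_eq]
    have h1 : dist m 0 < δ := by
      rw [Real.dist_eq, sub_zero]
      calc |m| ≤ min (δ/2) (1/2) := hm
        _ ≤ δ/2 := min_le_left _ _
        _ < δ := by linarith
    have h2 : dist μ 0 < δ := by
      rw [Real.dist_eq, sub_zero]
      calc |μ| ≤ min (δ/2) (1/2) := hμ
        _ ≤ δ/2 := min_le_left _ _
        _ < δ := by linarith
    exact max_lt h1 h2
  have := hδ hdist
  simp only [Real.dist_eq, hV00] at this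
  have habs : |EE1 p lam m μ - V| < s*V/2 := this
  have hs1 : s = 1 ∨ s = -1 := by
    rcases lt_or_gt_of_ne hp0 with hneg | hpos
    · right; rw [hs]; exact Real.sign_of_neg hneg
    · left; rw [hs]; exact Real.sign_of_pos hpos
  rcases hs1 with h | h <;> rw [h] <;> rw [h] at habs hsV <;>
    cases' abs_lt.mp habs with hl hr <;> nlinarith

/-- positivity of the sign-corrected first derivative away from the origin -/
lemma EE_pos_outer (hp : -1 < p) (hp0 : p ≠ 0) (hlam0 : 0 < lam) (hlam1 : lam < 1)
    (r : ℝ) (hr0 : 0 < r) (hr1 : r ≤ 1/2) :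
    ∃ m₁ : ℝ, 0 < m₁ ∧ ∀ m μ : ℝ, |m| ≤ m₁ → r ≤ μ → μ < 1 →
      0 < Real.sign p * EE p lam m μ := by
  have e1 : (0:ℝ) < p+1 := by linarith
  have e2 : (0:ℝ) < p+2 := by linarith
  -- δ : lower bound for s*(X - Y) ; M : bound for the m-linear error terms
  set δ : ℝ := |((1+r):ℝ)^p - 1| with hδdef
  have h1r : (1:ℝ) < 1 + r := by linarith
  have hδ0 : 0 < δ := by
    rw [hδdef, abs_pos, sub_ne_zero]
    rcases lt_or_gt_of_ne hp0 with hneg | hpos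
    · exact ne_of_lt (Real.rpow_lt_one_of_one_lt_of_neg h1r hneg)
    · exact ne_of_gt ((Real.one_lt_rpow_iff_of_pos (by linarith)).2 (Or.inl ⟨h1r, hpos⟩))
  set M : ℝ := 2*lam*(|p|)*((2:ℝ)^(p+1)+1)/(p+1) + 1 with hM
  have hM0 : 0 < M := by
    rw [hM]; positivity
  refine ⟨min (min 1 ((1-lam)/(6*lam))) ((1-lam)*δ/(4*M)),
    lt_min (lt_min one_pos (div_pos (by linarith) (by linarith)))
      (div_pos (mul_pos (by linarith) hδ0) (by linarith)), ?_⟩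
  intro m μ hm hrμ hμ1
  have hm1 : |m| ≤ 1 := le_trans hm (le_trans (min_le_left _ _) (min_le_left _ _))
  have hm2 : |m| ≤ (1-lam)/(6*lam) := le_trans hm (le_trans (min_le_left _ _) (min_le_right _ _))
  have hm3 : |m| ≤ (1-lam)*δ/(4*M) := le_trans hm (min_le_right _ _)
  have hu : (0:ℝ) < 1 + μ := by linarith
  have hv : (0:ℝ) < 1 - μ := by linarith
  have hu1 : 1 + r ≤ 1 + μ := by linarith
  have hu2 : 1 + μ ≤ 2 := by linarith
  have hv2 : 1 - μ ≤ 1 := by linarith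
  set X : ℝ := (1+μ)^p with hX
  set Y : ℝ := (1-μ)^p with hY
  have hX0 : 0 < X := Real.rpow_pos_of_pos hu p
  have hY0 : 0 < Y := Real.rpow_pos_of_pos hv p
  -- coefficient bound : 1-λ+λ(2μm−m²) ≥ (1−λ)/2
  have hcoef : (1-lam)/2 ≤ 1-lam+lam*(2*μ*m-m^2) := by
    have h1 : |2*μ*m - m^2| ≤ 3*|m| := by
      have : |2*μ*m - m^2| ≤ |2*μ*m| + |m^2| := abs_sub _ _
      have h2 : |2*μ*m| = 2 * |μ| * |m| := by rw [abs_mul, abs_mul, abs_two]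
      have h3 : |μ| ≤ 1 := by rw [abs_le]; constructor <;> linarith
      have h4 : |m^2| = |m|^2 := by rw [abs_of_nonneg (sq_nonneg m), sq_abs]
      nlinarith [abs_nonneg m, abs_nonneg μ, mul_le_mul_of_nonneg_right h3 (abs_nonneg m),
        mul_le_mul_of_nonneg_right hm1 (abs_nonneg m)]
    have h5 : lam*(2*μ*m-m^2) ≥ -(3*lam*|m|) := by
      have := (abs_le.mp h1).1
      nlinarith
    have h6 : 3*lam*|m| ≤ (1-lam)/2 := by
      have h7 := mul_le_mul_of_nonneg_left hm2 (by positivity : (0:ℝ) ≤ 3*lam)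
      have h8 : 3*lam*((1-lam)/(6*lam)) = (1-lam)/2 := by field_simp; ring
      linarith [h8 ▸ h7]
    linarith
  -- error term bound
  have hEb : (1+μ)*X + (1-μ)*Y ≤ (2:ℝ)^(p+1) + 1 := by
    have hx : (1+μ)*X = (1+μ)^(p+1) := by
      rw [hX, mul_comm]; exact (Real.rpow_add_one hu.ne' p).symm
    have hy : (1-μ)*Y = (1-μ)^(p+1) := by
      rw [hY, mul_comm]; exact (Real.rpow_add_one hv.ne' p).symm
    rw [hx, hy]
    have h1 : (1+μ)^(p+1) ≤ (2:ℝ)^(p+1) := Real.rpow_le_rpow hu.le hu2 (by linarith)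
    have h2 : (1-μ)^(p+1) ≤ 1 := Real.rpow_le_one hv.le hv2 (by linarith)
    linarith
  have hEpos : 0 < (1+μ)*X + (1-μ)*Y := by positivity
  -- third term nonneg : s*p*(u²X − v²Y) ≥ 0
  have hthird : (1-μ)^2*Y ≤ (1+μ)^2*X := by
    have hx : (1+μ)^2*X = (1+μ)^(p+2) := by
      rw [hX, show (p:ℝ)+2 = p+1+1 from by ring, Real.rpow_add_one hu.ne',
        Real.rpow_add_one hu.ne']; ring
    have hy : (1-μ)^2*Y = (1-μ)^(p+2) := by
      rw [hY, show (p:ℝ)+2 = p+1+1 from by ring, Real.rpow_add_one hv.ne',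
        Real.rpow_add_one hv.ne']; ring
    rw [hx, hy]
    exact Real.rpow_le_rpow hv.le (by linarith) (by linarith)
  -- bound for the m-linear last term
  have hT4 : |(2*lam*p*m/(p+1))*((1+μ)*X+(1-μ)*Y)| ≤ M * |m| := by
    rw [abs_mul, abs_of_nonneg hEpos.le]
    have h1 : |2*lam*p*m/(p+1)| = 2*lam*(|p|) * |m|/(p+1) := by
      rw [abs_div, abs_of_pos e1, abs_mul, abs_mul, abs_mul, abs_two,
        abs_of_pos hlam0]
    rw [h1]
    calc 2*lam*(|p|) * |m|/(p+1)*((1+μ)*X+(1-μ)*Y)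
        ≤ 2*lam*(|p|) * |m|/(p+1)*((2:ℝ)^(p+1)+1) := by
          apply mul_le_mul_of_nonneg_left hEb (by positivity)
      _ = (2*lam*(|p|)*((2:ℝ)^(p+1)+1)/(p+1)) * |m| := by ring
      _ ≤ M * |m| := by
          apply mul_le_mul_of_nonneg_right _ (abs_nonneg m)
          rw [hM]; linarith
  have hMm : M * |m| ≤ (1-lam)*δ/4 := by
    have := mul_le_mul_of_nonneg_left hm3 hM0.le
    calc M * |m| ≤ M*((1-lam)*δ/(4*M)) := this
      _ = (1-lam)*δ/4 := by field_simp
  clear_value δ M X Y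
  rw [EE_decomp hp m μ hu hv, ← hX, ← hY]
  rcases lt_or_gt_of_ne hp0 with hneg | hpos
  · -- p < 0, sign = -1
    rw [Real.sign_of_neg hneg]
    have hXr : X ≤ (1+r)^p := by rw [hX]; exact Real.rpow_le_rpow_of_nonpos (by linarith) hu1 hneg.le
    have hY1 : 1 ≤ Y := by rw [hY]; exact Real.one_le_rpow_of_pos_of_le_one_of_nonpos hv hv2 hneg.le
    have hδeq : δ = 1 - (1+r)^p := by
      rw [hδdef, abs_of_neg (by linarith [Real.rpow_lt_one_of_one_lt_of_neg h1r hneg])]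
      ring
    have hZδ : δ ≤ Y - X := by rw [hδeq]; linarith
    have hT1 : (1-lam+lam*(2*μ*m-m^2))*(X-Y) ≤ -((1-lam)/2*δ) := by
      nlinarith [mul_le_mul hcoef hZδ hδ0.le (by linarith : (0:ℝ) ≤ 1-lam+lam*(2*μ*m-m^2))]
    have hT2 : (lam/(p+1))*((1+μ)*(1-μ))*(X-Y) ≤ 0 := by
      apply mul_nonpos_of_nonneg_of_nonpos
      · positivity
      · linarith
    have hT3 : (lam*p/((p+1)*(p+2)))*((1+μ)^2*X-(1-μ)^2*Y) ≤ 0 := by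
      apply mul_nonpos_of_nonpos_of_nonneg
      · apply div_nonpos_of_nonpos_of_nonneg
        · nlinarith
        · positivity
      · linarith
    have h4' := (abs_le.mp hT4).1
    nlinarith
  · -- p > 0, sign = 1
    rw [Real.sign_of_pos hpos]
    have hXr : (1+r)^p ≤ X := by rw [hX]; exact Real.rpow_le_rpow (by linarith) hu1 hpos.le
    have hY1 : Y ≤ 1 := by rw [hY]; exact Real.rpow_le_one hv.le hv2 hpos.le
    have hδeq : δ = (1+r)^p - 1 := by
      rw [hδdef, abs_of_pos]
      have := (Real.one_lt_rpow_iff_of_pos (by linarith : (0:ℝ) < 1+r)).2 (Or.inl ⟨h1r, hpos⟩)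
      linarith
    have hZδ : δ ≤ X - Y := by rw [hδeq]; linarith
    have hT1 : (1-lam)/2*δ ≤ (1-lam+lam*(2*μ*m-m^2))*(X-Y) :=
      mul_le_mul hcoef hZδ hδ0.le (by linarith)
    have hT2 : 0 ≤ (lam/(p+1))*((1+μ)*(1-μ))*(X-Y) := by
      apply mul_nonneg
      · positivity
      · linarith
    have hT3 : 0 ≤ (lam*p/((p+1)*(p+2)))*((1+μ)^2*X-(1-μ)^2*Y) := by
      apply mul_nonneg
      · positivity
      · linarith
    have h4' := (abs_le.mp hT4).2
    nlinarith

lemma hasDerivAt_one_sub_affq (c q x : ℝ) (h : 1 - c*x ≠ 0) :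
    HasDerivAt (fun t : ℝ => (1-c*t)^q) (-(q*(1-c*x)^(q-1)*c)) x := by
  have h' : (1:ℝ) + (-c)*x ≠ 0 := by rw [neg_mul, ← sub_eq_add_neg]; exact h
  have h2 := hasDerivAt_affq 1 (-c) q x h'
  simp only [neg_mul, ← sub_eq_add_neg] at h2
  convert h2 using 1
  ring


variable {kap : ℝ}


/-- first derivative of m ↦ EE p lam m (kap*m) -/
def HH1 (p lam kap m : ℝ) : ℝ :=
  ((-(2*lam*(kap-1))) * (kap*m - m)) * ((1+kap*m)^p - (1-kap*m)^p)
  + (1 - lam*(kap*m - m)^2) * ((p*kap)*((1+kap*m)^(p-1) + (1-kap*m)^(p-1)))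
  + (2*lam*p*(kap-1)/(p+1)) * ((1+kap*m)^(p+1) + (1-kap*m)^(p+1))
  + ((2*lam*p*kap)*(kap*m - m)) * ((1+kap*m)^p - (1-kap*m)^p)
  - (lam*p*kap) * ((1+kap*m)^(p+1) + (1-kap*m)^(p+1))

/-- second derivative of m ↦ EE p lam m (kap*m) : raw combinator output -/
def HH2 (p lam kap m : ℝ) : ℝ :=
  (((-(2*lam*(kap-1))) * (kap - 1)) * ((1+kap*m)^p - (1-kap*m)^p)
    + ((-(2*lam*(kap-1))) * (kap*m - m)) *
      (p*(1+kap*m)^(p-1)*kap - -(p*(1-kap*m)^(p-1)*kap)))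
  + ((-(lam*(2*(kap*m - m)*(kap - 1)))) * ((p*kap)*((1+kap*m)^(p-1) + (1-kap*m)^(p-1)))
    + (1 - lam*(kap*m - m)^2) *
      ((p*kap)*((p-1)*(1+kap*m)^(p-1-1)*kap + -((p-1)*(1-kap*m)^(p-1-1)*kap))))
  + (2*lam*p*(kap-1)/(p+1)) *
      ((p+1)*(1+kap*m)^(p+1-1)*kap + -((p+1)*(1-kap*m)^(p+1-1)*kap))
  + (((2*lam*p*kap) * (kap - 1)) * ((1+kap*m)^p - (1-kap*m)^p)
    + ((2*lam*p*kap)*(kap*m - m)) *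
      (p*(1+kap*m)^(p-1)*kap - -(p*(1-kap*m)^(p-1)*kap)))
  - (lam*p*kap) * ((p+1)*(1+kap*m)^(p+1-1)*kap + -((p+1)*(1-kap*m)^(p+1-1)*kap))

lemma hw_deriv (m : ℝ) : HasDerivAt (fun t : ℝ => kap*t - t) (kap - 1) m := by
  simpa using ((hasDerivAt_id m).const_mul kap).fun_sub (hasDerivAt_id m)

lemma hA_deriv (m : ℝ) : HasDerivAt (fun t : ℝ => 1 - lam*(kap*t - t)^2)
    (-(lam*(2*(kap*m - m)*(kap - 1)))) m := by
  have h0 : HasDerivAt (fun t : ℝ => (kap*t - t)^2) (2*(kap*m - m)*(kap - 1)) m := by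
    have := (hw_deriv (kap := kap) m).fun_pow 2
    simpa [pow_one] using this
  simpa using (h0.const_mul lam).const_sub 1

lemma HH_hasDeriv (hp : -1 < p) (m : ℝ) (ha : (1:ℝ) + kap*m ≠ 0) (hb : (1:ℝ) - kap*m ≠ 0) :
    HasDerivAt (fun t => EE p lam t (kap*t)) (HH1 p lam kap m) m := by
  have e1 : (p:ℝ)+1 ≠ 0 := by linarith
  have e2 : (p:ℝ)+2 ≠ 0 := by linarith
  have hka : ∀ q : ℝ, HasDerivAt (fun t : ℝ => (1+kap*t)^q) (q*(1+kap*m)^(q-1)*kap) m :=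
    fun q => hasDerivAt_affq 1 kap q m ha
  have hkb : ∀ q : ℝ, HasDerivAt (fun t : ℝ => (1-kap*t)^q) (-(q*(1-kap*m)^(q-1)*kap)) m :=
    fun q => hasDerivAt_one_sub_affq kap q m hb
  have hT0 := (hka p).fun_sub (hkb p)
  have hS1 := (hka (p+1)).fun_add (hkb (p+1))
  have hT2 := (hka (p+2)).fun_sub (hkb (p+2))
  have hB : HasDerivAt (fun t : ℝ => (2*lam*p/(p+1))*(kap*t - t)) ((2*lam*p/(p+1))*(kap-1)) m :=
    (hw_deriv m).const_mul _
  have hmain := (((hA_deriv (lam := lam) (kap := kap) m).mul hT0).add (hB.mul hS1)).sub (hT2.const_mul (lam*p/(p+2)))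
  have hfun : (fun t => EE p lam t (kap*t)) = (fun t =>
      (1 - lam*(kap*t - t)^2) * ((1+kap*t)^p - (1-kap*t)^p)
      + (2*lam*p/(p+1))*(kap*t - t)*((1+kap*t)^(p+1) + (1-kap*t)^(p+1))
      - (lam*p/(p+2))*((1+kap*t)^(p+2) - (1-kap*t)^(p+2))) := by
    funext t; unfold EE; ring_nf
  rw [hfun]
  refine hmain.congr_deriv (Eq.symm ?_)
  unfold HH1
  rw [show p+1-1 = p from by ring, show p+2-1 = p+1 from by ring]
  field_simp
  ring

lemma HH1_hasDeriv (hp : -1 < p) (m : ℝ) (ha : (1:ℝ) + kap*m ≠ 0) (hb : (1:ℝ) - kap*m ≠ 0) :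
    HasDerivAt (fun t => HH1 p lam kap t) (HH2 p lam kap m) m := by
  have hka : ∀ q : ℝ, HasDerivAt (fun t : ℝ => (1+kap*t)^q) (q*(1+kap*m)^(q-1)*kap) m :=
    fun q => hasDerivAt_affq 1 kap q m ha
  have hkb : ∀ q : ℝ, HasDerivAt (fun t : ℝ => (1-kap*t)^q) (-(q*(1-kap*m)^(q-1)*kap)) m :=
    fun q => hasDerivAt_one_sub_affq kap q m hb
  have hT0 := (hka p).sub (hkb p)
  have hSpm1 := (hka (p-1)).add (hkb (p-1))
  have hS1 := (hka (p+1)).add (hkb (p+1))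
  have hlin1 : HasDerivAt (fun t : ℝ => (-(2*lam*(kap-1))) * (kap*t - t))
      ((-(2*lam*(kap-1))) * (kap - 1)) m := (hw_deriv m).const_mul _
  have hlin4 : HasDerivAt (fun t : ℝ => (2*lam*p*kap)*(kap*t - t))
      ((2*lam*p*kap) * (kap - 1)) m := (hw_deriv m).const_mul _
  have r1 := hlin1.mul hT0
  have r2 := (hA_deriv (lam := lam) (kap := kap) m).mul (hSpm1.const_mul (p*kap))
  have r3 := hS1.const_mul (2*lam*p*(kap-1)/(p+1))
  have r4 := hlin4.mul hT0
  have r5 := hS1.const_mul (lam*p*kap)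
  have hmain := (((r1.add r2).add r3).add r4).sub r5
  exact hmain

lemma HH1_zero (hp : -1 < p) (hD : ((p+1) - (p-1)*lam) ≠ 0)
    (hk : kap = 2*lam/((p+1) - (p-1)*lam)) : HH1 p lam kap 0 = 0 := by
  have e1 : (p:ℝ)+1 ≠ 0 := by linarith
  unfold HH1
  simp only [mul_zero, zero_sub, sub_zero, mul_one, add_zero, sub_self, neg_zero, zero_pow,
    Real.one_rpow]
  rw [hk]
  have hD' : p + 1 - lam * (p - 1) ≠ 0 := by rwa [mul_comm] at hD
  field_simp
  ring

lemma HH2_zero : HH2 p lam kap 0 = 0 := by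
  unfold HH2
  rw [show kap*(0:ℝ) - 0 = 0 from by ring, show (1:ℝ) + kap*0 = 1 from by ring,
    show (1:ℝ) - kap*0 = 1 from by ring]
  simp only [Real.one_rpow]
  ring

lemma HH2_diff : DifferentiableAt ℝ (fun t => HH2 p lam kap t) 0 := by
  have hka : ∀ q : ℝ, DifferentiableAt ℝ (fun t : ℝ => (1+kap*t)^q) 0 :=
    fun q => (hasDerivAt_affq 1 kap q 0 (by norm_num)).differentiableAt
  have hkb : ∀ q : ℝ, DifferentiableAt ℝ (fun t : ℝ => (1-kap*t)^q) 0 :=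
    fun q => (hasDerivAt_one_sub_affq kap q 0 (by norm_num)).differentiableAt
  have hw : DifferentiableAt ℝ (fun t : ℝ => kap*t - t) 0 :=
    (hw_deriv (kap := kap) 0).differentiableAt
  unfold HH2
  fun_prop

section Cubic
variable (hp : -1 < p) (hlam0 : 0 < lam) (hlam1 : lam < 1)
  (hD : 0 < (p+1) - (p-1)*lam) (hk : kap = 2*lam/((p+1) - (p-1)*lam))
include hp hlam0 hlam1 hD hk

lemma HH_cubic :
    ∃ K δ : ℝ, 0 < K ∧ 0 < δ ∧ ∀ m : ℝ, |m| ≤ δ → |EE p lam m (kap*m)| ≤ K * |m|^3 := by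
  have hkpos : 0 < kap := by rw [hk]; positivity
  set ε : ℝ := 1/(2*kap) with hε
  have hε0 : 0 < ε := by positivity
  have hbase : ∀ x : ℝ, |x| ≤ ε → ((1:ℝ) + kap*x ≠ 0 ∧ (1:ℝ) - kap*x ≠ 0) := by
    intro x hx
    have h1 : |kap*x| ≤ 1/2 := by
      rw [abs_mul, abs_of_pos hkpos]
      calc kap * |x| ≤ kap * ε := by
            exact mul_le_mul_of_nonneg_left hx hkpos.le
        _ = 1/2 := by rw [hε]; field_simp
    have h2 := (abs_le.mp h1).1
    have h3 := (abs_le.mp h1).2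
    constructor <;> intro hcon <;> nlinarith
  have h2O : (fun x => HH2 p lam kap x) =O[nhds 0] fun x => (x:ℝ) := by
    have := (HH2_diff (p := p) (lam := lam) (kap := kap)).isBigO_sub
    simpa [HH2_zero] using this
  obtain ⟨K0, hK0⟩ := h2O.bound
  rw [Metric.eventually_nhds_iff] at hK0
  obtain ⟨δ', hδ'0, hδ'⟩ := hK0
  set K : ℝ := |K0| + 1 with hK
  have hKpos : 0 < K := by positivity
  set δ : ℝ := min ε (δ'/2) with hδdef
  have hδ0 : 0 < δ := lt_min hε0 (by linarith)
  refine ⟨K, δ, hKpos, hδ0, ?_⟩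
  have hHH2bd : ∀ x : ℝ, |x| ≤ δ → ‖HH2 p lam kap x‖ ≤ K * |x| := by
    intro x hx
    have hxδ' : dist x 0 < δ' := by
      rw [Real.dist_eq, sub_zero]
      calc |x| ≤ δ := hx
        _ ≤ δ'/2 := min_le_right _ _
        _ < δ' := by linarith
    have := hδ' hxδ'
    rw [Real.norm_eq_abs, Real.norm_eq_abs] at this
    calc ‖HH2 p lam kap x‖ = |HH2 p lam kap x| := Real.norm_eq_abs _
      _ ≤ K0 * |x| := this
      _ ≤ K * |x| := by
          apply mul_le_mul_of_nonneg_right _ (abs_nonneg x)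
          rw [hK]; calc K0 ≤ |K0| := le_abs_self _
            _ ≤ |K0| + 1 := by linarith
  have hmem_abs : ∀ m x : ℝ, x ∈ Set.uIcc 0 m → |x| ≤ |m| := by
    intro m x hx
    rcases Set.mem_uIcc.mp hx with ⟨h1, h2⟩ | ⟨h1, h2⟩ <;> rw [abs_le] <;>
      constructor <;> linarith [le_abs_self m, neg_abs_le m]
  have key1 : ∀ m : ℝ, |m| ≤ δ → |HH1 p lam kap m| ≤ (K * |m|) * |m| := by
    intro m hm
    have hmvt := Convex.norm_image_sub_le_of_norm_hasDerivWithin_le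
      (f := fun t => HH1 p lam kap t) (f' := fun t => HH2 p lam kap t)
      (s := Set.uIcc 0 m) (C := K * |m|) (x := 0) (y := m)
      (fun x hx => (HH1_hasDeriv hp x
        ((hbase x (le_trans (le_trans (hmem_abs m x hx) hm) (min_le_left _ _))).1)
        ((hbase x (le_trans (le_trans (hmem_abs m x hx) hm) (min_le_left _ _))).2)).hasDerivWithinAt)
      (fun x hx => by
        have hxδ : |x| ≤ δ := le_trans (hmem_abs m x hx) hm
        calc ‖HH2 p lam kap x‖ ≤ K * |x| := hHH2bd x hxδ
          _ ≤ K * |m| := mul_le_mul_of_nonneg_left (hmem_abs m x hx) hKpos.le)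
      (convex_uIcc 0 m) (Set.left_mem_uIcc) (Set.right_mem_uIcc)
    simp only [HH1_zero hp hD.ne' hk, sub_zero, Real.norm_eq_abs] at hmvt
    exact hmvt
  intro m hm
  have hH00 : EE p lam 0 (kap*0) = 0 := by
    rw [mul_zero]; unfold EE; norm_num
  have hmvt := Convex.norm_image_sub_le_of_norm_hasDerivWithin_le
    (f := fun t => EE p lam t (kap*t)) (f' := fun t => HH1 p lam kap t)
    (s := Set.uIcc 0 m) (C := (K * |m|) * |m|) (x := 0) (y := m)
    (fun x hx => (HH_hasDeriv hp x
      ((hbase x (le_trans (le_trans (hmem_abs m x hx) hm) (min_le_left _ _))).1)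
      ((hbase x (le_trans (le_trans (hmem_abs m x hx) hm) (min_le_left _ _))).2)).hasDerivWithinAt)
    (fun x hx => by
      have hxδ : |x| ≤ δ := le_trans (hmem_abs m x hx) hm
      calc ‖HH1 p lam kap x‖ = |HH1 p lam kap x| := Real.norm_eq_abs _
        _ ≤ (K * |x|) * |x| := key1 x hxδ
        _ ≤ (K * |m|) * |m| := by
            have h1 := hmem_abs m x hx
            have h2 := mul_le_mul_of_nonneg_left
              (mul_le_mul h1 h1 (abs_nonneg x) (abs_nonneg m)) hKpos.le
            nlinarith)
    (convex_uIcc 0 m) (Set.left_mem_uIcc) (Set.right_mem_uIcc)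
  simp only [hH00, sub_zero, Real.norm_eq_abs] at hmvt
  calc |EE p lam m (kap*m)| ≤ ((K * |m|) * |m|) * |m| := hmvt
    _ = K * |m|^3 := by ring


end Cubic


lemma ae_ne_one : ∀ᵐ z ∂(MeasureTheory.volume : MeasureTheory.Measure ℝ), z ≠ (1:ℝ) := by
  have h : MeasureTheory.volume ({(1:ℝ)} : Set ℝ) = 0 := Real.volume_singleton
  rw [MeasureTheory.ae_iff]
  convert h using 2
  ext z; simp

lemma ae_ne_negone : ∀ᵐ z ∂(MeasureTheory.volume : MeasureTheory.Measure ℝ), z ≠ (-1:ℝ) := by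
  have h : MeasureTheory.volume ({(-1:ℝ)} : Set ℝ) = 0 := Real.volume_singleton
  rw [MeasureTheory.ae_iff]
  convert h using 2
  ext z; simp

lemma gam_nonneg (hlam0 : 0 < lam) (m z : ℝ) (hm : 0 ≤ m) (hγ : lam*(1+m)^2 ≤ 1)
    (h1 : -1 ≤ z) (h2 : z ≤ 1) : 0 ≤ 1 - lam*(z-m)^2 := by
  have h : (z-m)^2 ≤ (1+m)^2 := by nlinarith
  nlinarith [mul_le_mul_of_nonneg_left h hlam0.le]

lemma tail_right (hp : -1 < p) (hp0 : p ≠ 0) (hlam0 : 0 < lam) (m : ℝ) (hm : 0 ≤ m)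
    (hγ : lam*(1+m)^2 ≤ 1) (ν : ℝ) (hν : 1 ≤ ν) :
    Real.sign p * ∫ z in (-1:ℝ)..1, (1 - lam*(z-m)^2) * |z-(1:ℝ)|^p ≤
      Real.sign p * ∫ z in (-1:ℝ)..1, (1 - lam*(z-m)^2) * |z-ν|^p := by
  rcases lt_or_gt_of_ne hp0 with hneg | hpos
  · rw [Real.sign_of_neg hneg]
    have hmono : (∫ z in (-1:ℝ)..1, (1 - lam*(z-m)^2) * |z-ν|^p) ≤
        ∫ z in (-1:ℝ)..1, (1 - lam*(z-m)^2) * |z-(1:ℝ)|^p := by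
      apply intervalIntegral.integral_mono_ae_restrict (by norm_num)
        (intInt_all hp m ν) (intInt_all hp m 1)
      filter_upwards [MeasureTheory.ae_restrict_mem measurableSet_Icc,
        MeasureTheory.ae_restrict_of_ae ae_ne_one] with z hz hz1
      have hz1' : z < 1 := lt_of_le_of_ne hz.2 hz1
      have e1 : |z - (1:ℝ)| = 1 - z := by
        rw [abs_sub_comm]; exact abs_of_nonneg (by linarith)
      have e2 : |z - ν| = ν - z := by
        rw [abs_sub_comm]; exact abs_of_nonneg (by linarith)
      rw [e1, e2]
      apply mul_le_mul_of_nonneg_left _ (gam_nonneg hlam0 m z hm hγ hz.1 hz.2)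
      exact Real.rpow_le_rpow_of_nonpos (by linarith) (by linarith) hneg.le
    linarith
  · rw [Real.sign_of_pos hpos]
    simp only [one_mul]
    apply intervalIntegral.integral_mono_on (by norm_num)
      (intInt_all hp m 1) (intInt_all hp m ν)
    intro z hz
    have e1 : |z - (1:ℝ)| = 1 - z := by
      rw [abs_sub_comm]; exact abs_of_nonneg (by linarith [hz.2])
    have e2 : |z - ν| = ν - z := by
      rw [abs_sub_comm]; exact abs_of_nonneg (by linarith [hz.2])
    rw [e1, e2]
    apply mul_le_mul_of_nonneg_left _ (gam_nonneg hlam0 m z hm hγ hz.1 hz.2)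
    exact Real.rpow_le_rpow (by linarith [hz.2]) (by linarith) hpos.le

lemma tail_left (hp : -1 < p) (hp0 : p ≠ 0) (hlam0 : 0 < lam) (m : ℝ) (hm : 0 ≤ m)
    (hγ : lam*(1+m)^2 ≤ 1) (ν : ℝ) (hν : ν ≤ -1) :
    Real.sign p * ∫ z in (-1:ℝ)..1, (1 - lam*(z-m)^2) * |z-(-1:ℝ)|^p ≤
      Real.sign p * ∫ z in (-1:ℝ)..1, (1 - lam*(z-m)^2) * |z-ν|^p := by
  rcases lt_or_gt_of_ne hp0 with hneg | hpos
  · rw [Real.sign_of_neg hneg]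
    have hmono : (∫ z in (-1:ℝ)..1, (1 - lam*(z-m)^2) * |z-ν|^p) ≤
        ∫ z in (-1:ℝ)..1, (1 - lam*(z-m)^2) * |z-(-1:ℝ)|^p := by
      apply intervalIntegral.integral_mono_ae_restrict (by norm_num)
        (intInt_all hp m ν) (intInt_all hp m (-1))
      filter_upwards [MeasureTheory.ae_restrict_mem measurableSet_Icc,
        MeasureTheory.ae_restrict_of_ae ae_ne_negone] with z hz hz1
      have hz1' : -1 < z := lt_of_le_of_ne hz.1 (Ne.symm hz1)
      have e1 : |z - (-1:ℝ)| = z + 1 := by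
        rw [abs_of_nonneg (by linarith)]; ring
      have e2 : |z - ν| = z - ν := abs_of_nonneg (by linarith)
      rw [e1, e2]
      apply mul_le_mul_of_nonneg_left _ (gam_nonneg hlam0 m z hm hγ hz.1 hz.2)
      exact Real.rpow_le_rpow_of_nonpos (by linarith) (by linarith) hneg.le
    linarith
  · rw [Real.sign_of_pos hpos]
    simp only [one_mul]
    apply intervalIntegral.integral_mono_on (by norm_num)
      (intInt_all hp m (-1)) (intInt_all hp m ν)
    intro z hz
    have e1 : |z - (-1:ℝ)| = z + 1 := by
      rw [abs_of_nonneg (by linarith [hz.1])]; ring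
    have e2 : |z - ν| = z - ν := abs_of_nonneg (by linarith [hz.1])
    rw [e1, e2]
    apply mul_le_mul_of_nonneg_left _ (gam_nonneg hlam0 m z hm hγ hz.1 hz.2)
    exact Real.rpow_le_rpow (by linarith [hz.1]) (by linarith) hpos.le



end Stmt13Aux

/-- For the toy density `γ(z) = 1 − λ(z−m)²` on `[−1,1]` with mode `m`, the order-`p` mean
is `2λm/((p+1) − (p−1)λ) + O(m³)`; the leading coefficient tends to `1` as `p → −1⁺`
(the order-`p` mean approaches the mode) and to `2λ/(1+λ) < 1` as `p → 0`
(the order-`p` mean does not approach the mode). -/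
theorem stmt13 (p lam : ℝ) (hp : -1 < p) (hp0 : p ≠ 0)
    (hlam0 : 0 < lam) (hlam1 : lam < 1) :
    (∃ m₀ > (0:ℝ), ∃ C > (0:ℝ), ∀ m : ℝ, 0 < m → m < m₀ →
      lam * (1 + m) ^ 2 ≤ 1 ∧
      ∀ μstar : ℝ,
        (∀ ν : ℝ,
          Real.sign p * ∫ z in (-1 : ℝ)..1, (1 - lam * (z - m) ^ 2) * |z - μstar| ^ p ≤
            Real.sign p * ∫ z in (-1 : ℝ)..1, (1 - lam * (z - m) ^ 2) * |z - ν| ^ p) →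
        |μstar - 2 * lam * m / ((p + 1) - (p - 1) * lam)| ≤ C * m ^ 3) ∧
    Tendsto (fun q : ℝ => 2 * lam / ((q + 1) - (q - 1) * lam))
      (nhdsWithin (-1) (Set.Ioi (-1))) (nhds 1) ∧
    Tendsto (fun q : ℝ => 2 * lam / ((q + 1) - (q - 1) * lam))
      (nhdsWithin 0 {(0:ℝ)}ᶜ) (nhds (2 * lam / (1 + lam))) ∧
    2 * lam / (1 + lam) < 1 := by
  have hs1 : Real.sign p = 1 ∨ Real.sign p = -1 := by
    rcases lt_or_gt_of_ne hp0 with h | h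
    · right; exact Real.sign_of_neg h
    · left; exact Real.sign_of_pos h
  refine ⟨?_, ?_, ?_, ?_⟩
  · -- main quantitative statement
    obtain ⟨r, c, hr0, hr12, hc0, hnear⟩ := EE1_pos_near hp hp0 hlam0 hlam1
    obtain ⟨m₁, hm₁0, houter⟩ := EE_pos_outer hp hp0 hlam0 hlam1 r hr0 hr12
    have hD : 0 < (p+1) - (p-1)*lam := by nlinarith
    set kap : ℝ := 2*lam/((p+1) - (p-1)*lam) with hk
    have hkap0 : 0 < kap := by rw [hk]; positivity
    obtain ⟨K, δK, hK0, hδK0, hcubic⟩ :=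
      HH_cubic (p := p) (lam := lam) (kap := kap) hp hlam0 hlam1 hD hk
    set C : ℝ := (K+1)/c with hC
    have hC0 : 0 < C := by rw [hC]; positivity
    set m₀ : ℝ := min (min (min 1 ((1-lam)/(3*lam))) (min m₁ δK))
      (min (r/(2*(kap+1))) (r/(2*C))) with hm₀
    have hm₀0 : 0 < m₀ := by
      apply lt_min (lt_min (lt_min one_pos (div_pos (by linarith) (by linarith)))
        (lt_min hm₁0 hδK0)) (lt_min (by positivity) (by positivity))
    refine ⟨m₀, hm₀0, C, hC0, ?_⟩
    intro m hm0 hmm₀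
    have hmle1 : m ≤ 1 :=
      le_trans hmm₀.le (le_trans (min_le_left _ _) (le_trans (min_le_left _ _) (min_le_left _ _)))
    have hmg : m ≤ (1-lam)/(3*lam) :=
      le_trans hmm₀.le (le_trans (min_le_left _ _) (le_trans (min_le_left _ _) (min_le_right _ _)))
    have hmm₁ : m ≤ m₁ :=
      le_trans hmm₀.le (le_trans (min_le_left _ _) (le_trans (min_le_right _ _) (min_le_left _ _)))
    have hmδK : m ≤ δK :=
      le_trans hmm₀.le (le_trans (min_le_left _ _) (le_trans (min_le_right _ _) (min_le_right _ _)))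
    have hmr1 : m ≤ r/(2*(kap+1)) :=
      le_trans hmm₀.le (le_trans (min_le_right _ _) (min_le_left _ _))
    have hmr2 : m ≤ r/(2*C) :=
      le_trans hmm₀.le (le_trans (min_le_right _ _) (min_le_right _ _))
    have hmr : m ≤ r := by
      refine le_trans hmr1 ?_
      rw [div_le_iff₀ (by positivity)]
      nlinarith
    have hγ : lam * (1 + m) ^ 2 ≤ 1 := by
      have h3 : 3*lam*m ≤ 1 - lam := by
        calc 3*lam*m ≤ 3*lam*((1-lam)/(3*lam)) :=
              mul_le_mul_of_nonneg_left hmg (by positivity)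
          _ = 1-lam := by field_simp
      nlinarith
    refine ⟨hγ, ?_⟩
    intro μstar hmin
    -- basic bounds on the key quantities
    have hkapm : kap*m ≤ r/2 := by
      have h1 : kap*m ≤ kap*(r/(2*(kap+1))) := mul_le_mul_of_nonneg_left hmr1 hkap0.le
      have h2 : kap*(r/(2*(kap+1))) ≤ r/2 := by
        rw [show kap*(r/(2*(kap+1))) = kap*r/(2*(kap+1)) from by ring,
          div_le_div_iff₀ (by positivity) (by norm_num : (0:ℝ) < 2)]
        nlinarith
      linarith
    have hCm3 : C*m^3 ≤ r/2 := by
      have h1 : m^3 ≤ m := by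
        have hm2 : m^2 ≤ 1 := by nlinarith
        nlinarith [mul_le_mul_of_nonneg_left hm2 hm0.le]
      have h2 : C*m^3 ≤ C*m := mul_le_mul_of_nonneg_left h1 hC0.le
      have h3 : C*m ≤ C*(r/(2*C)) := mul_le_mul_of_nonneg_left hmr2 hC0.le
      have h4 : C*(r/(2*C)) = r/2 := by field_simp
      linarith
    have hm3pos : 0 < m^3 := by positivity
    -- the key positivity statement for the derivative
    have keyPos : ∀ m' μ : ℝ, m' ≠ 0 → |m'| ≤ m → kap*m' + C*|m'|^3 ≤ μ → μ < 1 →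
        0 < Real.sign p * EE p lam m' μ := by
      intro m' μ hne hm' hμlow hμhi
      have habs3 : |m'|^3 ≤ m^3 := pow_le_pow_left₀ (abs_nonneg m') hm' 3
      have hkapm' : |kap*m'| ≤ r/2 := by
        rw [abs_mul, abs_of_pos hkap0]
        calc kap * |m'| ≤ kap * m := mul_le_mul_of_nonneg_left hm' hkap0.le
          _ ≤ r/2 := hkapm
      have hkm'l := (abs_le.mp hkapm').1
      have hkm'r := (abs_le.mp hkapm').2
      rcases le_or_gt μ r with hcase | hcase
      · -- convexity region [kap m', r]
        have hfd : ∀ x : ℝ, x ∈ Set.Icc (kap*m') r → -1 < x ∧ x < 1 := fun x hx =>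
          ⟨by nlinarith [hx.1], by nlinarith [hx.2]⟩
        have hkmr : kap*m' ≤ r := by linarith
        have hder : ∀ x : ℝ, x ∈ Set.Icc (kap*m') r →
            HasDerivAt (fun y => Real.sign p * EE p lam m' y) (Real.sign p * EE1 p lam m' x) x :=
          fun x hx => ((EE_hasDeriv hp m' x (hfd x hx).1 (hfd x hx).2).const_mul _)
        have hcontf : ContinuousOn (fun y => Real.sign p * EE p lam m' y) (Set.Icc (kap*m') r) :=
          fun x hx => (hder x hx).continuousAt.continuousWithinAt
        have hdiff : DifferentiableOn ℝ (fun y => Real.sign p * EE p lam m' y)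
            (interior (Set.Icc (kap*m') r)) := by
          rw [interior_Icc]; intro x hx
          exact ((hder x (Set.mem_Icc_of_Ioo hx)).differentiableAt).differentiableWithinAt
        have hbound : ∀ x ∈ interior (Set.Icc (kap*m') r),
            c ≤ deriv (fun y => Real.sign p * EE p lam m' y) x := by
          rw [interior_Icc]; intro x hx
          rw [(hder x (Set.mem_Icc_of_Ioo hx)).deriv]
          refine hnear m' x (le_trans hm' hmr) ?_
          rw [abs_le]; exact ⟨by nlinarith [hx.1], hx.2.le⟩
        have hCabs : 0 ≤ C*|m'|^3 := by positivity
        have hμIcc : μ ∈ Set.Icc (kap*m') r := ⟨by linarith, hcase⟩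
        have hkmIcc : kap*m' ∈ Set.Icc (kap*m') r := ⟨le_refl _, hkmr⟩
        have hmvt := Convex.mul_sub_le_image_sub_of_le_deriv (convex_Icc (kap*m') r)
          hcontf hdiff hbound (kap*m') hkmIcc μ hμIcc (by linarith)
        have hEE0 : |EE p lam m' (kap*m')| ≤ K * |m'|^3 := hcubic m' (le_trans hm' hmδK)
        have hflow : -(K*|m'|^3) ≤ Real.sign p * EE p lam m' (kap*m') := by
          rcases hs1 with h | h
          · rw [h]; linarith [(abs_le.mp hEE0).1]
          · rw [h]; linarith [(abs_le.mp hEE0).2]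
        have hstep : c*(C*|m'|^3) ≤ c*(μ - kap*m') :=
          mul_le_mul_of_nonneg_left (by linarith) hc0.le
        have hcC : c*(C*|m'|^3) = (K+1)*|m'|^3 := by
          rw [hC]; field_simp
        have habs0 : 0 < |m'|^3 := by
          have := abs_pos.mpr hne
          positivity
        nlinarith
      · exact houter m' μ (le_trans hm' hmm₁) hcase.le hμhi
    -- continuity of the explicit value function
    have hffc : Continuous (fun x : ℝ => Real.sign p * ff p lam m x) := by
      have hS1 : Continuous (fun x : ℝ => (1+x)^(p+1) + (1-x)^(p+1)) :=
        (continuous_one_add_rpow (p+1) (by linarith)).add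
          (continuous_const_sub_rpow 1 (p+1) (by linarith))
      have hT2 : Continuous (fun x : ℝ => (1+x)^(p+2) - (1-x)^(p+2)) :=
        (continuous_one_add_rpow (p+2) (by linarith)).sub
          (continuous_const_sub_rpow 1 (p+2) (by linarith))
      have hS3 : Continuous (fun x : ℝ => (1+x)^(p+3) + (1-x)^(p+3)) :=
        (continuous_one_add_rpow (p+3) (by linarith)).add
          (continuous_const_sub_rpow 1 (p+3) (by linarith))
      have hA : Continuous (fun x : ℝ => 1 - lam*(x-m)^2) := by fun_prop
      have hB : Continuous (fun x : ℝ => 2*lam*(x-m)) := by fun_prop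
      have hbody : Continuous (fun x : ℝ => ff p lam m x) := by
        unfold ff
        exact (((hA.mul hS1).div_const (p+1)).add ((hB.mul hT2).div_const (p+2))).sub
          ((continuous_const.mul hS3).div_const (p+3))
      exact continuous_const.mul hbody
    have hβpos : 0 < kap*m + C*m^3 := by positivity
    have hβr : kap*m + C*m^3 ≤ r := by linarith
    have hβ1 : kap*m + C*m^3 < 1 := by linarith
    have hα1 : -1 < kap*m - C*m^3 := by
      have : 0 ≤ kap*m := by positivity
      linarith
    have habsm : |m| = m := abs_of_pos hm0
    have hmono : StrictMonoOn (fun x => Real.sign p * ff p lam m x)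
        (Set.Icc (kap*m + C*m^3) 1) := by
      apply strictMonoOn_of_deriv_pos (convex_Icc _ _) hffc.continuousOn
      intro x hx
      rw [interior_Icc] at hx
      rw [((ff_hasDeriv hp m x (by linarith [hx.1]) hx.2).const_mul (Real.sign p)).deriv]
      exact keyPos m x hm0.ne' habsm.le (by rw [habsm]; exact hx.1.le) hx.2
    have hanti : StrictAntiOn (fun x => Real.sign p * ff p lam m x)
        (Set.Icc (-1) (kap*m - C*m^3)) := by
      apply strictAntiOn_of_deriv_neg (convex_Icc _ _) hffc.continuousOn
      intro x hx
      rw [interior_Icc] at hx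
      rw [((ff_hasDeriv hp m x hx.1 (by linarith [hx.2])).const_mul (Real.sign p)).deriv]
      have hkey := keyPos (-m) (-x) (by simpa using hm0.ne')
        (by rw [abs_neg, habsm]) (by rw [abs_neg, habsm]; linarith [hx.2])
        (by linarith [hx.1])
      rw [EE_reflect] at hkey
      rcases hs1 with h | h <;> rw [h] at hkey ⊢ <;> linarith
    have hkapmeq : kap*m = 2*lam*m/((p+1) - (p-1)*lam) := by rw [hk]; ring
    by_contra hcon
    rw [not_le, ← hkapmeq] at hcon
    rcases lt_abs.mp hcon with hgt | hlt
    · -- μstar is too far to the right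
      have h1 := hmin (kap*m + C*m^3)
      rw [ff_eq hp m (kap*m + C*m^3) (by linarith) hβ1.le] at h1
      rcases le_or_gt μstar 1 with hle | hgt1
      · rw [ff_eq hp m μstar (by linarith) hle] at h1
        have h2 := hmono (Set.mem_Icc.mpr ⟨le_refl _, hβ1.le⟩)
          (Set.mem_Icc.mpr ⟨by linarith, hle⟩) (by linarith)
        simp only [] at h2
        linarith
      · have htail := tail_right hp hp0 hlam0 m hm0.le hγ μstar hgt1.le
        rw [ff_eq hp m 1 (by norm_num) (le_refl 1)] at htail
        have h2 := hmono (Set.mem_Icc.mpr ⟨le_refl _, hβ1.le⟩)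
          (Set.mem_Icc.mpr ⟨hβ1.le, le_refl 1⟩) hβ1
        simp only [] at h2
        linarith
    · -- μstar is too far to the left
      have h1 := hmin (kap*m - C*m^3)
      rw [ff_eq hp m (kap*m - C*m^3) hα1.le (by linarith)] at h1
      rcases le_or_gt (-1) μstar with hge | hlt1
      · rw [ff_eq hp m μstar hge (by linarith)] at h1
        have h2 := hanti (Set.mem_Icc.mpr ⟨hge, by linarith⟩)
          (Set.mem_Icc.mpr ⟨hα1.le, le_refl _⟩) (by linarith)
        simp only [] at h2
        linarith
      · have htail := tail_left hp hp0 hlam0 m hm0.le hγ μstar hlt1.le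
        rw [ff_eq hp m (-1) (le_refl _) (by norm_num)] at htail
        have h2 := hanti (Set.mem_Icc.mpr ⟨le_refl _, hα1.le⟩)
          (Set.mem_Icc.mpr ⟨hα1.le, le_refl _⟩) hα1
        simp only [] at h2
        linarith
  · -- tendsto at -1
    have hc : ContinuousAt (fun q : ℝ => 2 * lam / ((q + 1) - (q - 1) * lam)) (-1) := by
      apply ContinuousAt.div continuousAt_const (by fun_prop)
      rw [show ((-1:ℝ)+1) - ((-1:ℝ)-1)*lam = 2*lam from by ring]
      positivity
    have h0 := hc.continuousWithinAt (s := Set.Ioi (-1))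
    have heval : (2:ℝ) * lam / (-1 + 1 - (-1 - 1) * lam) = 1 := by
      rw [show (-1:ℝ) + 1 - (-1 - 1)*lam = 2*lam from by ring,
        div_self (by positivity : (2:ℝ)*lam ≠ 0)]
    rw [ContinuousWithinAt, heval] at h0
    exact h0
  · -- tendsto at 0
    have hc : ContinuousAt (fun q : ℝ => 2 * lam / ((q + 1) - (q - 1) * lam)) 0 := by
      apply ContinuousAt.div continuousAt_const (by fun_prop)
      rw [show ((0:ℝ)+1) - ((0:ℝ)-1)*lam = 1+lam from by ring]
      positivity
    have h0 := hc.continuousWithinAt (s := {(0:ℝ)}ᶜ)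
    have heval : (2:ℝ) * lam / (0 + 1 - (0 - 1) * lam) = 2 * lam / (1 + lam) := by
      rw [show (0:ℝ) + 1 - (0 - 1)*lam = 1+lam from by ring]
    rw [ContinuousWithinAt, heval] at h0
    exact h0
  · rw [div_lt_one (by positivity)]
    linarith
end

section
/- Let h > 0 be fixed. For every integer k, the finite-volume discretisation ψ_k(p) = (1/h)·∫_{(k−1/2)h}^{(k+1/2)h} |x|^p dx of the penaliser Ψ_p(z) = |z|^p satisfies lim_{p→0⁺} ψ_k(p) = 1. In other words, for any fixed bin width h, the finite-volume discretisation of |z|^p converges to the constant unity function as p → 0⁺ (rather than to the discrete mode penaliser which is 0 at k = 0 and 1 elsewhere). -/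
set_option linter.unnecessarySimpa false


open Filter

/-- For any fixed bin width `h > 0` and any bin index `k`, the finite-volume
discretisation `ψ_k(p) = (1/h)∫_{(k−1/2)h}^{(k+1/2)h} |x|^p dx` of the penaliser `|z|^p`
converges to the constant `1` as `p → 0⁺`. -/
theorem stmt14 (h : ℝ) (hh : 0 < h) (k : ℤ) :
    Tendsto
      (fun p : ℝ =>
        (1 / h) * ∫ x in (((k : ℝ) - 1 / 2) * h)..(((k : ℝ) + 1 / 2) * h), |x| ^ p)
      (nhdsWithin 0 (Set.Ioi 0)) (nhds 1) := by
  set a : ℝ := ((k : ℝ) - 1 / 2) * h with ha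
  set b : ℝ := ((k : ℝ) + 1 / 2) * h with hb
  have key : Tendsto (fun p : ℝ => ∫ x in a..b, |x| ^ p) (nhdsWithin 0 (Set.Ioi 0))
      (nhds (∫ _x in a..b, (1 : ℝ))) := by
    apply intervalIntegral.tendsto_integral_filter_of_dominated_convergence
      (bound := fun x => max 1 |x|)
    · filter_upwards [self_mem_nhdsWithin] with p (hp : 0 < p)
      exact (continuous_abs.rpow_const fun x => Or.inr hp.le).aestronglyMeasurable
    · filter_upwards [Ioo_mem_nhdsGT_of_mem (Set.mem_Ico.mpr ⟨le_refl 0, zero_lt_one⟩)]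
        with p (hp : p ∈ Set.Ioo (0:ℝ) 1)
      refine MeasureTheory.ae_of_all _ fun x _ => ?_
      rw [Real.norm_eq_abs, abs_of_nonneg (Real.rpow_nonneg (abs_nonneg x) p)]
      rcases le_total |x| 1 with hx | hx
      · exact le_max_of_le_left (Real.rpow_le_one (abs_nonneg x) hx hp.1.le)
      · calc |x| ^ p ≤ |x| ^ (1 : ℝ) :=
              Real.rpow_le_rpow_of_exponent_le hx hp.2.le
          _ = |x| := Real.rpow_one _
          _ ≤ max 1 |x| := le_max_right _ _
    · exact (continuous_const.max continuous_abs).intervalIntegrable _ _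
    · have : ∀ᵐ x : ℝ, x ≠ 0 := by
        rw [MeasureTheory.ae_iff]
        simpa using Real.volume_singleton (a := 0)
      filter_upwards [this] with x hx _
      have h1 : Tendsto (fun p : ℝ => |x| ^ p) (nhds 0) (nhds 1) := by
        have := (Real.continuousAt_const_rpow (a := |x|) (b := 0) (abs_ne_zero.mpr hx)).tendsto
        simpa using this -- 

      exact h1.mono_left nhdsWithin_le_nhds
  have hint : (∫ _x in a..b, (1 : ℝ)) = h := by
    simp [ha, hb]; ring
  rw [hint] at key
  have := key.const_mul (1 / h)
  simpa [one_div, inv_mul_cancel₀ hh.ne'] using this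
end

section
/- Let β ≥ δ > 0, let u(x,y) = β x² + δ y², and let p be a real number with p ≥ 1 − δ/β. Then at every point (x,y) ≠ (0,0) the right-hand side of the M-smoother PDE is nonnegative: u_ξξ + (p−1)·u_ηη = (2β²δx² + 2βδ²y² + (p−1)(2β³x² + 2δ³y²))/(β²x² + δ²y²) ≥ 0, where η = ∇u/|∇u| and ξ is a unit vector orthogonal to ∇u. Conversely, if p < 1 − β/δ, then u_ξξ + (p−1)·u_ηη < 0 at every (x,y) ≠ (0,0). -/
/-- The anisotropic quadratic function `u(x,y) = βx² + δy²`. -/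
noncomputable def uQuad (β δ : ℝ) (v : EuclideanSpace ℝ (Fin 2)) : ℝ :=
  β * v 0 ^ 2 + δ * v 1 ^ 2

/-- Second directional derivative `vᵀ (D²u)(x) v`. -/
noncomputable def secondDirDeriv (u : EuclideanSpace ℝ (Fin 2) → ℝ)
    (x v : EuclideanSpace ℝ (Fin 2)) : ℝ :=
  iteratedFDeriv ℝ 2 u x ![v, v]

/-- Unit gradient direction `η = ∇u/|∇u|` of `uQuad` at `v`. -/
noncomputable def etaQ (β δ : ℝ) (v : EuclideanSpace ℝ (Fin 2)) : EuclideanSpace ℝ (Fin 2) :=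
  ‖gradient (uQuad β δ) v‖⁻¹ • gradient (uQuad β δ) v

/-- Unit level-line direction `ξ ⟂ ∇u` of `uQuad` at `v`. -/
noncomputable def xiQ (β δ : ℝ) (v : EuclideanSpace ℝ (Fin 2)) : EuclideanSpace ℝ (Fin 2) :=
  ‖gradient (uQuad β δ) v‖⁻¹ •
    (EuclideanSpace.single (0 : Fin 2) (-(gradient (uQuad β δ) v 1)) +
      EuclideanSpace.single (1 : Fin 2) (gradient (uQuad β δ) v 0))

noncomputable abbrev E2 := EuclideanSpace ℝ (Fin 2)

lemma hasF (β δ : ℝ) (x : E2) :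
    HasFDerivAt (uQuad β δ)
      ((2*β*x 0) • (EuclideanSpace.proj (0:Fin 2) : E2 →L[ℝ] ℝ)
        + (2*δ*x 1) • (EuclideanSpace.proj (1:Fin 2) : E2 →L[ℝ] ℝ)) x := by
  have h0 := (EuclideanSpace.proj (0:Fin 2) : E2 →L[ℝ] ℝ).hasFDerivAt (x := x)
  have h1 := (EuclideanSpace.proj (1:Fin 2) : E2 →L[ℝ] ℝ).hasFDerivAt (x := x)
  have h := ((h0.mul h0).const_mul β).add ((h1.mul h1).const_mul δ)
  have he : uQuad β δ = fun v : E2 =>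
      β * ((EuclideanSpace.proj (0:Fin 2) : E2 →L[ℝ] ℝ) v *
        (EuclideanSpace.proj (0:Fin 2) : E2 →L[ℝ] ℝ) v) +
      δ * ((EuclideanSpace.proj (1:Fin 2) : E2 →L[ℝ] ℝ) v *
        (EuclideanSpace.proj (1:Fin 2) : E2 →L[ℝ] ℝ) v) := by
    funext v; simp [uQuad]; ring
  rw [he]
  refine h.congr_fderiv ?_
  ext w
  simp
  ring

lemma sdd (β δ : ℝ) (z w : E2) :
    secondDirDeriv (uQuad β δ) z w = 2*β*(w 0)^2 + 2*δ*(w 1)^2 := by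
  have hfd : fderiv ℝ (uQuad β δ) = fun x : E2 =>
      (2*β*x 0) • (EuclideanSpace.proj (0:Fin 2) : E2 →L[ℝ] ℝ)
        + (2*δ*x 1) • (EuclideanSpace.proj (1:Fin 2) : E2 →L[ℝ] ℝ) :=
    funext fun x => (hasF β δ x).fderiv
  have h0 := (EuclideanSpace.proj (0:Fin 2) : E2 →L[ℝ] ℝ).hasFDerivAt (x := z)
  have h1 := (EuclideanSpace.proj (1:Fin 2) : E2 →L[ℝ] ℝ).hasFDerivAt (x := z)
  have hc0 : HasFDerivAt (fun x : E2 => (2*β*x 0))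
      ((2*β) • (EuclideanSpace.proj (0:Fin 2) : E2 →L[ℝ] ℝ)) z := by
    have := h0.const_mul (2*β)
    exact this
  have hc1 : HasFDerivAt (fun x : E2 => (2*δ*x 1))
      ((2*δ) • (EuclideanSpace.proj (1:Fin 2) : E2 →L[ℝ] ℝ)) z := by
    have := h1.const_mul (2*δ)
    exact this
  have hM := (hc0.smul_const (EuclideanSpace.proj (0:Fin 2) : E2 →L[ℝ] ℝ)).add
    (hc1.smul_const (EuclideanSpace.proj (1:Fin 2) : E2 →L[ℝ] ℝ))
  have h2 : fderiv ℝ (fderiv ℝ (uQuad β δ)) z =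
      ((2*β) • (EuclideanSpace.proj (0:Fin 2) : E2 →L[ℝ] ℝ)).smulRight
          (EuclideanSpace.proj (0:Fin 2) : E2 →L[ℝ] ℝ)
        + ((2*δ) • (EuclideanSpace.proj (1:Fin 2) : E2 →L[ℝ] ℝ)).smulRight
          (EuclideanSpace.proj (1:Fin 2) : E2 →L[ℝ] ℝ) := by
    rw [hfd]
    exact hM.fderiv
  rw [secondDirDeriv, iteratedFDeriv_two_apply, h2]
  simp
  ring

lemma gradQ (β δ : ℝ) (x : E2) :
    gradient (uQuad β δ) x =
      EuclideanSpace.single (0:Fin 2) (2*β*x 0) + EuclideanSpace.single (1:Fin 2) (2*δ*x 1) := by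
  have hg : HasGradientAt (uQuad β δ)
      (EuclideanSpace.single (0:Fin 2) (2*β*x 0) + EuclideanSpace.single (1:Fin 2) (2*δ*x 1)) x := by
    rw [hasGradientAt_iff_hasFDerivAt]
    refine (hasF β δ x).congr_fderiv ?_
    ext w
    simp [InnerProductSpace.toDual_apply_apply, inner_add_left, EuclideanSpace.inner_single_left]
  exact hg.gradient

lemma pos_aux (β δ a b p : ℝ) (hβδ : δ ≤ β) (hδ : 0 < δ) (hβ : 0 < β)
    (h1 : (1 - p) * β ≤ δ) :
    0 ≤ 2 * β ^ 2 * δ * a ^ 2 + 2 * β * δ ^ 2 * b ^ 2 +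
      (p - 1) * (2 * β ^ 3 * a ^ 2 + 2 * δ ^ 3 * b ^ 2) := by
  have hs : 0 ≤ δ - (1 - p) * β := by linarith
  nlinarith [mul_nonneg hs (mul_nonneg (pow_pos hβ 3).le (sq_nonneg a)),
    mul_nonneg hs (mul_nonneg (pow_pos hδ 3).le (sq_nonneg b)),
    mul_nonneg (mul_nonneg (sub_nonneg.2 hβδ) (by linarith : (0:ℝ) ≤ β + δ))
      (mul_nonneg (mul_pos hδ hδ).le (sq_nonneg b))]

lemma neg_aux (β δ a b p : ℝ) (hβδ : δ ≤ β) (hδ : 0 < δ) (hβ : 0 < β)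
    (hD : 0 < β ^ 2 * a ^ 2 + δ ^ 2 * b ^ 2) (h1 : β < (1 - p) * δ) :
    2 * β ^ 2 * δ * a ^ 2 + 2 * β * δ ^ 2 * b ^ 2 +
      (p - 1) * (2 * β ^ 3 * a ^ 2 + 2 * δ ^ 3 * b ^ 2) < 0 := by
  have hpos : 0 < 2 * β ^ 3 * a ^ 2 + 2 * δ ^ 3 * b ^ 2 := by
    nlinarith [mul_pos hδ hD,
      mul_nonneg (sub_nonneg.2 hβδ) (mul_nonneg (sq_nonneg β) (sq_nonneg a))]
  have hs : 0 < (1 - p) * δ - β := by linarith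
  nlinarith [mul_pos hs hpos,
    mul_nonneg (mul_nonneg (sub_nonneg.2 hβδ) (by linarith : (0:ℝ) ≤ β + δ))
      (mul_nonneg hβ.le (sq_nonneg a))]

/-- Sign of the M-smoother PDE right-hand side `u_ξξ + (p−1)u_ηη` for `u = βx² + δy²`:
nonnegative if `p ≥ 1 − δ/β`, and negative everywhere if `p < 1 − β/δ`. -/
theorem stmt16 (β δ : ℝ) (hβδ : δ ≤ β) (hδ : 0 < δ)
    (v : EuclideanSpace ℝ (Fin 2)) (hv : v ≠ 0) (p : ℝ) :
    secondDirDeriv (uQuad β δ) v (xiQ β δ v) +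
        (p - 1) * secondDirDeriv (uQuad β δ) v (etaQ β δ v) =
      (2 * β ^ 2 * δ * v 0 ^ 2 + 2 * β * δ ^ 2 * v 1 ^ 2 +
          (p - 1) * (2 * β ^ 3 * v 0 ^ 2 + 2 * δ ^ 3 * v 1 ^ 2)) /
        (β ^ 2 * v 0 ^ 2 + δ ^ 2 * v 1 ^ 2) ∧
    (1 - δ / β ≤ p →
      0 ≤ secondDirDeriv (uQuad β δ) v (xiQ β δ v) +
          (p - 1) * secondDirDeriv (uQuad β δ) v (etaQ β δ v)) ∧
    (p < 1 - β / δ →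
      secondDirDeriv (uQuad β δ) v (xiQ β δ v) +
          (p - 1) * secondDirDeriv (uQuad β δ) v (etaQ β δ v) < 0) := by
  have hβ : 0 < β := hδ.trans_le hβδ
  set a := v 0 with ha
  set b := v 1 with hb
  have hvne : a ≠ 0 ∨ b ≠ 0 := by
    by_contra h
    push_neg at h
    apply hv
    ext i
    fin_cases i
    · simpa using h.1
    · simpa using h.2
  have hD : 0 < β ^ 2 * a ^ 2 + δ ^ 2 * b ^ 2 := by
    rcases hvne with h | h
    · have : 0 < β ^ 2 * a ^ 2 := by positivity
      nlinarith [sq_nonneg (δ * b)]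
    · have : 0 < δ ^ 2 * b ^ 2 := by positivity
      nlinarith [sq_nonneg (β * a)]
  -- gradient components
  have hg := gradQ β δ v
  have hg0 : gradient (uQuad β δ) v 0 = 2 * β * a := by
    rw [hg]; simp [EuclideanSpace.single_apply, a]
  have hg1 : gradient (uQuad β δ) v 1 = 2 * δ * b := by
    rw [hg]; simp [EuclideanSpace.single_apply, b]
  have hN : ‖gradient (uQuad β δ) v‖ ^ 2 = (2*β*a) ^ 2 + (2*δ*b) ^ 2 := by
    rw [← real_inner_self_eq_norm_sq, hg, inner_add_left, inner_add_right, inner_add_right]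
    simp only [EuclideanSpace.inner_single_left, a, b, conj_trivial,
      EuclideanSpace.single_apply]
    norm_num
    ring
  have hNpos : (0:ℝ) < ‖gradient (uQuad β δ) v‖ ^ 2 := by
    rw [hN]; nlinarith [hD]
  set N := ‖gradient (uQuad β δ) v‖ with hNdef
  have hNne : N ≠ 0 := by
    intro h
    rw [h] at hNpos
    simp at hNpos
  -- compute the two second directional derivatives
  have heta : secondDirDeriv (uQuad β δ) v (etaQ β δ v) =
      (N ^ 2)⁻¹ * (2*β*(2*β*a)^2 + 2*δ*(2*δ*b)^2) := by
    rw [sdd]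
    simp only [etaQ, PiLp.smul_apply, smul_eq_mul, hg0, hg1, ← hNdef]
    rw [pow_two]
    ring
  have hxi : secondDirDeriv (uQuad β δ) v (xiQ β δ v) =
      (N ^ 2)⁻¹ * (2*β*(2*δ*b)^2 + 2*δ*(2*β*a)^2) := by
    rw [sdd]
    simp only [xiQ, PiLp.smul_apply, PiLp.add_apply, smul_eq_mul, hg0, hg1, ← hNdef,
      EuclideanSpace.single_apply]
    rw [pow_two]
    simp
    ring
  have key : secondDirDeriv (uQuad β δ) v (xiQ β δ v) +
        (p - 1) * secondDirDeriv (uQuad β δ) v (etaQ β δ v) =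
      (2 * β ^ 2 * δ * a ^ 2 + 2 * β * δ ^ 2 * b ^ 2 +
          (p - 1) * (2 * β ^ 3 * a ^ 2 + 2 * δ ^ 3 * b ^ 2)) /
        (β ^ 2 * a ^ 2 + δ ^ 2 * b ^ 2) := by
    have h4 : (2*β*a) ^ 2 + (2*δ*b) ^ 2 = 4 * (β ^ 2 * a ^ 2 + δ ^ 2 * b ^ 2) := by ring
    rw [heta, hxi, hN, h4, eq_div_iff hD.ne']
    field_simp
    ring
  refine ⟨key, ?_, ?_⟩
  · intro hp
    rw [key]
    apply div_nonneg _ hD.le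
    have h1 : (1 - p) * β ≤ δ := by
      rw [← le_div_iff₀ hβ]
      linarith
    exact pos_aux β δ a b p hβδ hδ hβ h1
  · intro hp
    rw [key]
    apply div_neg_of_neg_of_pos _ hD
    have h1 : β < (1 - p) * δ := by
      rw [← div_lt_iff₀ hδ]
      linarith
    exact neg_aux β δ a b p hβδ hδ hβ hD h1
end
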